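/- arXiv:2411.01247 — 4 statements merged into one kernel-verified Lean document; each statement's English description precedes it below -/
import Mathlib

section
/- For every integer d ≥ 2 and all x, y ∈ [0,1] with |x − y| ≤ 1/(2^{d+1}·d), one has |ρ_d(x) − ρ_d(y)| ≤ K₂(d)·|x − y|, where K₂(d) = (d(d+1)/2)·(4^d + (2√d)^{d+3}·ω_{d−1}) and ω_{d−1} is the Lebesgue volume of the unit Euclidean ball in ℝ^{d−1}. -/
open MeasureTheory Set

noncomputable section

def DeltaDom (d : ℕ) (x : ℝ) : Set (Fin d → ℝ) :=
  {p | (∀ k, |p k| ≤ 1) ∧ |∑ k : Fin d, p k * x ^ ((k : ℕ) + 1)| ≤ 1}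

/-- Koleda's density function `ρ_d`. -/
def rho (d : ℕ) (x : ℝ) : ℝ :=
  ∫ p in DeltaDom d x, |∑ k : Fin d, (((k : ℕ) : ℝ) + 1) * p k * x ^ (k : ℕ)|

/-- `ω_k`: Lebesgue volume of the unit Euclidean ball in `ℝ^k`. -/
def ballVol (k : ℕ) : ℝ :=
  (volume (Metric.ball (0 : EuclideanSpace ℝ (Fin k)) 1)).toReal

def K2 (d : ℕ) : ℝ :=
  ((d : ℝ) * ((d : ℝ) + 1) / 2) *
    ((4 : ℝ) ^ d + (2 * Real.sqrt d) ^ (d + 3) * ballVol (d - 1))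

/-! ### Auxiliary definitions -/

def gAbs (d : ℕ) (x : ℝ) (p : Fin d → ℝ) : ℝ :=
  |∑ k : Fin d, (((k : ℕ) : ℝ) + 1) * p k * x ^ (k : ℕ)|

def fSum (d : ℕ) (x : ℝ) (p : Fin d → ℝ) : ℝ :=
  ∑ k : Fin d, p k * x ^ ((k : ℕ) + 1)

lemma rho_eq (d : ℕ) (x : ℝ) : rho d x = ∫ p in DeltaDom d x, gAbs d x p := rfl

lemma mem_DeltaDom {d : ℕ} {x : ℝ} {p : Fin d → ℝ} :
    p ∈ DeltaDom d x ↔ (∀ k, |p k| ≤ 1) ∧ |fSum d x p| ≤ 1 := Iff.rfl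

/-! ### Elementary estimates -/

lemma pow_lip {x y : ℝ} (hx : x ∈ Set.Icc (0:ℝ) 1) (hy : y ∈ Set.Icc (0:ℝ) 1) (n : ℕ) :
    |x ^ n - y ^ n| ≤ n * |x - y| := by
  obtain ⟨hx0, hx1⟩ := hx
  obtain ⟨hy0, hy1⟩ := hy
  induction n with
  | zero => simp
  | succ n ih =>
    have h1 : x ^ (n+1) - y ^ (n+1) = x ^ n * (x - y) + y * (x ^ n - y ^ n) := by ring
    have hxn : |x ^ n| ≤ 1 := by
      rw [abs_of_nonneg (pow_nonneg hx0 n)]; exact pow_le_one₀ hx0 hx1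
    have hyn : |y| ≤ 1 := by rw [abs_of_nonneg hy0]; exact hy1
    calc |x ^ (n+1) - y ^ (n+1)| ≤ |x ^ n * (x - y)| + |y * (x ^ n - y ^ n)| := by
          rw [h1]; exact abs_add_le _ _
      _ ≤ 1 * |x - y| + 1 * (n * |x - y|) := by
          rw [abs_mul, abs_mul]
          gcongr
      _ = (↑(n+1)) * |x - y| := by push_cast; ring

lemma sum_fin_add_one (d : ℕ) :
    ∑ k : Fin d, (((k:ℕ):ℝ) + 1) = d * (d + 1) / 2 := by
  rw [Fin.sum_univ_eq_sum_range (fun k => ((k:ℝ) + 1))]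
  induction d with
  | zero => simp
  | succ n ih => rw [Finset.sum_range_succ, ih]; push_cast; ring

lemma gAbs_bound {d : ℕ} {x : ℝ} (hx : x ∈ Set.Icc (0:ℝ) 1) {p : Fin d → ℝ}
    (hp : ∀ k, |p k| ≤ 1) :
    gAbs d x p ≤ d * (d + 1) / 2 := by
  calc gAbs d x p
      ≤ ∑ k : Fin d, |(((k:ℕ):ℝ) + 1) * p k * x ^ (k:ℕ)| := Finset.abs_sum_le_sum_abs _ _
    _ ≤ ∑ k : Fin d, (((k:ℕ):ℝ) + 1) := by
        apply Finset.sum_le_sum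
        intro k _
        rw [abs_mul, abs_mul]
        have h1 : |(((k:ℕ):ℝ) + 1)| = ((k:ℕ):ℝ) + 1 := abs_of_nonneg (by positivity)
        rw [h1]
        have h2 : |x ^ (k:ℕ)| ≤ 1 := by
          rw [abs_of_nonneg (pow_nonneg hx.1 _)]; exact pow_le_one₀ hx.1 hx.2
        have : (((k:ℕ):ℝ) + 1) * |p k| * |x ^ (k:ℕ)| ≤ (((k:ℕ):ℝ) + 1) * 1 * 1 := by
          gcongr <;> first | exact hp k | exact h2
        linarith
    _ = d * (d + 1) / 2 := sum_fin_add_one d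

lemma gAbs_lip {d : ℕ} {x y : ℝ} (hx : x ∈ Set.Icc (0:ℝ) 1) (hy : y ∈ Set.Icc (0:ℝ) 1)
    {p : Fin d → ℝ} (hp : ∀ k, |p k| ≤ 1) :
    |(∑ k : Fin d, (((k:ℕ):ℝ) + 1) * p k * x ^ (k:ℕ))
      - ∑ k : Fin d, (((k:ℕ):ℝ) + 1) * p k * y ^ (k:ℕ)|
      ≤ d * (d * (d + 1) / 2) * |x - y| := by
  rw [← Finset.sum_sub_distrib]
  calc |∑ k : Fin d, ((((k:ℕ):ℝ) + 1) * p k * x ^ (k:ℕ) - (((k:ℕ):ℝ) + 1) * p k * y ^ (k:ℕ))|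
      ≤ ∑ k : Fin d, |(((k:ℕ):ℝ) + 1) * p k * x ^ (k:ℕ) - (((k:ℕ):ℝ) + 1) * p k * y ^ (k:ℕ)| :=
        Finset.abs_sum_le_sum_abs _ _
    _ ≤ ∑ k : Fin d, (((k:ℕ):ℝ) + 1) * (d * |x - y|) := by
        apply Finset.sum_le_sum
        intro k _
        have h1 : (((k:ℕ):ℝ) + 1) * p k * x ^ (k:ℕ) - (((k:ℕ):ℝ) + 1) * p k * y ^ (k:ℕ)
            = (((k:ℕ):ℝ) + 1) * p k * (x ^ (k:ℕ) - y ^ (k:ℕ)) := by ring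
        rw [h1, abs_mul, abs_mul]
        have h2 : |(((k:ℕ):ℝ) + 1)| = ((k:ℕ):ℝ) + 1 := abs_of_nonneg (by positivity)
        rw [h2]
        have h3 : |x ^ (k:ℕ) - y ^ (k:ℕ)| ≤ (k:ℕ) * |x - y| := pow_lip hx hy _
        have h4 : ((k:ℕ):ℝ) ≤ d := by exact_mod_cast (k.2.le)
        have h5 : (0:ℝ) ≤ |x - y| := abs_nonneg _
        have h6 : |x ^ (k:ℕ) - y ^ (k:ℕ)| ≤ (d:ℝ) * |x - y| :=
          h3.trans (mul_le_mul_of_nonneg_right h4 h5)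
        have : (((k:ℕ):ℝ) + 1) * |p k| * |x ^ (k:ℕ) - y ^ (k:ℕ)|
            ≤ (((k:ℕ):ℝ) + 1) * 1 * ((d:ℝ) * |x - y|) := by
          gcongr <;> first | exact hp k | exact h6
        linarith
    _ = d * (d * (d + 1) / 2) * |x - y| := by
        rw [← Finset.sum_mul, sum_fin_add_one d]; ring

lemma fSum_lip {d : ℕ} {x y : ℝ} (hx : x ∈ Set.Icc (0:ℝ) 1) (hy : y ∈ Set.Icc (0:ℝ) 1)
    {p : Fin d → ℝ} (hp : ∀ k, |p k| ≤ 1) :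
    |fSum d x p - fSum d y p| ≤ d * (d + 1) / 2 * |x - y| := by
  rw [fSum, fSum, ← Finset.sum_sub_distrib]
  calc |∑ k : Fin d, (p k * x ^ ((k:ℕ)+1) - p k * y ^ ((k:ℕ)+1))|
      ≤ ∑ k : Fin d, |p k * x ^ ((k:ℕ)+1) - p k * y ^ ((k:ℕ)+1)| := Finset.abs_sum_le_sum_abs _ _
    _ ≤ ∑ k : Fin d, (((k:ℕ):ℝ) + 1) * |x - y| := by
        apply Finset.sum_le_sum
        intro k _
        have h1 : p k * x ^ ((k:ℕ)+1) - p k * y ^ ((k:ℕ)+1)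
            = p k * (x ^ ((k:ℕ)+1) - y ^ ((k:ℕ)+1)) := by ring
        rw [h1, abs_mul]
        have h3 : |x ^ ((k:ℕ)+1) - y ^ ((k:ℕ)+1)| ≤ ((k:ℕ)+1 : ℕ) * |x - y| := pow_lip hx hy _
        push_cast at h3
        have : |p k| * |x ^ ((k:ℕ)+1) - y ^ ((k:ℕ)+1)| ≤ 1 * ((((k:ℕ):ℝ) + 1) * |x - y|) :=
          mul_le_mul (hp k) h3 (abs_nonneg _) zero_le_one
        linarith
    _ = d * (d + 1) / 2 * |x - y| := by rw [← Finset.sum_mul, sum_fin_add_one d]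

lemma fSum_small {d : ℕ} {x : ℝ} (hx : x ∈ Set.Icc (0:ℝ) 1) (hdx : (d:ℝ) * x ≤ 1)
    {p : Fin d → ℝ} (hp : ∀ k, |p k| ≤ 1) :
    |fSum d x p| ≤ 1 := by
  calc |fSum d x p|
      ≤ ∑ k : Fin d, |p k * x ^ ((k:ℕ)+1)| := Finset.abs_sum_le_sum_abs _ _
    _ ≤ ∑ k : Fin d, x := by
        apply Finset.sum_le_sum
        intro k _
        rw [abs_mul]
        have h2 : |x ^ ((k:ℕ)+1)| = x ^ ((k:ℕ)+1) := abs_of_nonneg (pow_nonneg hx.1 _)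
        have h3 : x ^ ((k:ℕ)+1) ≤ x ^ 1 := pow_le_pow_of_le_one hx.1 hx.2 (by omega)
        rw [h2]
        have : |p k| * x ^ ((k:ℕ)+1) ≤ 1 * x ^ 1 :=
          mul_le_mul (hp k) h3 (pow_nonneg hx.1 _) zero_le_one
        rw [pow_one] at this
        linarith
    _ = d * x := by rw [Finset.sum_const]; simp [mul_comm]
    _ ≤ 1 := hdx

/-! ### The cube and `DeltaDom` -/

lemma cube_eq_Icc (n : ℕ) : {w : Fin n → ℝ | ∀ j, |w j| ≤ 1}
    = Set.Icc (fun _ => (-1:ℝ)) (fun _ => 1) := by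
  ext w; simp [Set.mem_Icc, Pi.le_def, abs_le, forall_and]

lemma cube_vol (n : ℕ) :
    volume (Set.Icc (fun _ => (-1:ℝ)) (fun _ => 1) : Set (Fin n → ℝ))
      = ENNReal.ofReal 2 ^ n := by
  rw [Real.volume_Icc_pi]; norm_num

lemma isClosed_DeltaDom (d : ℕ) (x : ℝ) : IsClosed (DeltaDom d x) := by
  have h1 : DeltaDom d x = {p : Fin d → ℝ | ∀ k, |p k| ≤ 1}
      ∩ {p : Fin d → ℝ | |∑ k : Fin d, p k * x ^ ((k : ℕ) + 1)| ≤ 1} := rfl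
  rw [h1, cube_eq_Icc]
  refine IsClosed.inter isClosed_Icc ?_
  have hc : Continuous fun p : Fin d → ℝ => |∑ k : Fin d, p k * x ^ ((k : ℕ) + 1)| :=
    (continuous_finset_sum _ fun k _ => (continuous_apply k).mul continuous_const).abs
  exact isClosed_le hc continuous_const

lemma measurableSet_DeltaDom (d : ℕ) (x : ℝ) : MeasurableSet (DeltaDom d x) :=
  (isClosed_DeltaDom d x).measurableSet

lemma DeltaDom_subset (d : ℕ) (x : ℝ) :
    DeltaDom d x ⊆ {p : Fin d → ℝ | ∀ k, |p k| ≤ 1} := fun _ hp => hp.1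

lemma volume_DeltaDom_le (d : ℕ) (x : ℝ) :
    volume (DeltaDom d x) ≤ ENNReal.ofReal (2 ^ d) := by
  calc volume (DeltaDom d x) ≤ volume {p : Fin d → ℝ | ∀ k, |p k| ≤ 1} :=
        measure_mono (DeltaDom_subset d x)
    _ = ENNReal.ofReal 2 ^ d := by rw [cube_eq_Icc, cube_vol]
    _ = ENNReal.ofReal (2 ^ d) := by rw [ENNReal.ofReal_pow (by norm_num)]

lemma volume_DeltaDom_lt_top (d : ℕ) (x : ℝ) : volume (DeltaDom d x) < ⊤ :=
  lt_of_le_of_lt (volume_DeltaDom_le d x) ENNReal.ofReal_lt_top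

lemma continuous_gAbs (d : ℕ) (x : ℝ) : Continuous (gAbs d x) :=
  (continuous_finset_sum _ fun k _ =>
    (continuous_const.mul (continuous_apply k)).mul continuous_const).abs

lemma integrableOn_gAbs {d : ℕ} (x : ℝ) {S : Set (Fin d → ℝ)}
    (hS : S ⊆ {p : Fin d → ℝ | ∀ k, |p k| ≤ 1}) :
    IntegrableOn (gAbs d x) S volume := by
  have h := ((continuous_gAbs d x).continuousOn).integrableOn_compact (μ := volume)
    (isCompact_Icc (a := fun _ : Fin d => (-1:ℝ)) (b := fun _ => (1:ℝ)))
  exact h.mono_set (by rw [← cube_eq_Icc]; exact hS)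

/-! ### Slab measure estimate -/

lemma vol_affine_preimage (a c : ℝ) (ha : 0 < a) (s : Set ℝ) :
    volume ((fun t => a * t + c) ⁻¹' s) = ENNReal.ofReal a⁻¹ * volume s := by
  have h1 : (fun t : ℝ => a * t + c) ⁻¹' s
      = (fun t : ℝ => a * t) ⁻¹' ((fun u : ℝ => u + c) ⁻¹' s) := rfl
  rw [h1, Real.volume_preimage_mul_left ha.ne' _, measure_preimage_add_right,
    abs_of_pos (inv_pos.mpr ha)]

lemma slab_measure {n : ℕ} (q : Fin (n+1) → ℝ) (hq : 0 < q 0) (s : Set ℝ)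
    (hs : MeasurableSet s) :
    volume {p : Fin (n+1) → ℝ | (∀ k, |p k| ≤ 1) ∧ (∑ k, p k * q k) ∈ s}
      ≤ ENNReal.ofReal 2 ^ n * (ENNReal.ofReal (q 0)⁻¹ * volume s) := by
  set c : (Fin n → ℝ) → ℝ := fun w => ∑ j : Fin n, w j * q ((0 : Fin (n+1)).succAbove j) with hc
  set T : Set (ℝ × (Fin n → ℝ)) :=
    {z | (∀ j, |z.2 j| ≤ 1) ∧ q 0 * z.1 + c z.2 ∈ s} with hT
  have hcm : Measurable c := by fun_prop
  have hTm : MeasurableSet T := by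
    have : T = {z : ℝ × (Fin n → ℝ) | ∀ j, |z.2 j| ≤ 1} ∩
        ((fun z : ℝ × (Fin n → ℝ) => q 0 * z.1 + c z.2) ⁻¹' s) := by
      ext z; simp only [hT, mem_setOf_eq, mem_inter_iff, mem_preimage]
    rw [this]
    refine MeasurableSet.inter ?_
      ((by fun_prop : Measurable fun z : ℝ × (Fin n → ℝ) => q 0 * z.1 + c z.2) hs)
    have : {z : ℝ × (Fin n → ℝ) | ∀ j, |z.2 j| ≤ 1}
        = Prod.snd ⁻¹' (Set.Icc (fun _ => (-1:ℝ)) (fun _ => 1)) := by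
      rw [← cube_eq_Icc]; rfl
    rw [this]
    exact measurable_snd measurableSet_Icc
  have hmp := volume_preserving_piFinSuccAbove (fun _ : Fin (n+1) => ℝ) 0
  have hsub : {p : Fin (n+1) → ℝ | (∀ k, |p k| ≤ 1) ∧ (∑ k, p k * q k) ∈ s}
      ⊆ (MeasurableEquiv.piFinSuccAbove (fun _ : Fin (n+1) => ℝ) 0) ⁻¹' T := by
    intro p hp
    obtain ⟨h1, h2⟩ := hp
    constructor
    · intro j; exact h1 _
    · show q 0 * p 0 + c (Fin.removeNth 0 p) ∈ s
      have e1 : q 0 * p 0 + c (Fin.removeNth 0 p) = ∑ k, p k * q k := by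
        rw [hc, Fin.sum_univ_succAbove (fun k => p k * q k) 0]
        simp [Fin.removeNth]
        ring
      rw [e1]; exact h2
  calc volume {p : Fin (n+1) → ℝ | (∀ k, |p k| ≤ 1) ∧ (∑ k, p k * q k) ∈ s}
      ≤ volume ((MeasurableEquiv.piFinSuccAbove (fun _ : Fin (n+1) => ℝ) 0) ⁻¹' T) :=
        measure_mono hsub
    _ = (volume.prod volume) T := hmp.measure_preimage hTm.nullMeasurableSet
    _ = ∫⁻ w, volume ((fun t => (t, w)) ⁻¹' T) := Measure.prod_apply_symm hTm
    _ ≤ ∫⁻ w, (Set.Icc (fun _ => (-1:ℝ)) (fun _ => 1)).indicator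
          (fun _ => ENNReal.ofReal (q 0)⁻¹ * volume s) w := by
        apply lintegral_mono
        intro w
        by_cases hw : w ∈ (Set.Icc (fun _ => (-1:ℝ)) (fun _ => 1) : Set (Fin n → ℝ))
        · rw [Set.indicator_of_mem hw]
          have hss : (fun t => (t, w)) ⁻¹' T ⊆ (fun t : ℝ => q 0 * t + c w) ⁻¹' s := by
            intro t ht; exact ht.2
          calc volume ((fun t => (t, w)) ⁻¹' T)
              ≤ volume ((fun t : ℝ => q 0 * t + c w) ⁻¹' s) := measure_mono hss
            _ = ENNReal.ofReal (q 0)⁻¹ * volume s := vol_affine_preimage _ _ hq s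
        · rw [Set.indicator_of_notMem hw]
          have hemp : (fun t => (t, w)) ⁻¹' T = ∅ := by
            apply Set.eq_empty_of_forall_notMem
            intro t ht
            exact hw (by rw [← cube_eq_Icc]; exact ht.1)
          simp [hemp]
    _ = ENNReal.ofReal (q 0)⁻¹ * volume s *
          volume (Set.Icc (fun _ => (-1:ℝ)) (fun _ => 1) : Set (Fin n → ℝ)) :=
        lintegral_indicator_const measurableSet_Icc _
    _ = ENNReal.ofReal 2 ^ n * (ENNReal.ofReal (q 0)⁻¹ * volume s) := by
        rw [cube_vol]; ring

/-! ### Volume of the symmetric difference -/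

lemma vol_diff_le {n : ℕ} {u v : ℝ} (hv0 : 0 < v) {δ : ℝ} (hδ0 : 0 ≤ δ)
    (hlip : ∀ p : Fin (n+1) → ℝ, (∀ k, |p k| ≤ 1) →
      |fSum (n+1) u p - fSum (n+1) v p| ≤ δ) :
    volume (DeltaDom (n+1) u \ DeltaDom (n+1) v)
      ≤ ENNReal.ofReal (2 * (2 ^ n * (v⁻¹ * δ))) := by
  set q : Fin (n+1) → ℝ := fun k => v ^ ((k:ℕ)+1) with hq
  have hq0 : q 0 = v := by simp [hq]
  have hqpos : 0 < q 0 := by rw [hq0]; exact hv0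
  have hfq : ∀ p : Fin (n+1) → ℝ, (∑ k, p k * q k) = fSum (n+1) v p := by
    intro p; rw [fSum]
  set S1 := {p : Fin (n+1) → ℝ | (∀ k, |p k| ≤ 1) ∧ (∑ k, p k * q k) ∈ Set.Ioc 1 (1+δ)}
    with hS1
  set S2 := {p : Fin (n+1) → ℝ | (∀ k, |p k| ≤ 1) ∧ (∑ k, p k * q k) ∈ Set.Ico (-(1+δ)) (-1)}
    with hS2
  have hsub : DeltaDom (n+1) u \ DeltaDom (n+1) v ⊆ S1 ∪ S2 := by
    rintro p ⟨⟨hcube, hfu⟩, hnot⟩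
    have hfv : ¬ |fSum (n+1) v p| ≤ 1 := fun h => hnot ⟨hcube, h⟩
    push_neg at hfv
    have hlipp := hlip p hcube
    have habs : |fSum (n+1) v p| ≤ 1 + δ := by
      have h1 : |fSum (n+1) v p| ≤ |fSum (n+1) u p| + |fSum (n+1) v p - fSum (n+1) u p| := by
        have := abs_add_le (fSum (n+1) u p) (fSum (n+1) v p - fSum (n+1) u p)
        simpa using this
      rw [abs_sub_comm] at h1
      exact h1.trans (by exact add_le_add hfu hlipp)
    rcases le_or_gt 0 (fSum (n+1) v p) with hts | hts
    · left
      refine ⟨hcube, ?_⟩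
      rw [hfq p]
      constructor
      · rwa [abs_of_nonneg hts] at hfv
      · rw [abs_of_nonneg hts] at habs; exact habs
    · right
      refine ⟨hcube, ?_⟩
      rw [hfq p]
      constructor
      · rw [abs_of_neg hts] at habs; linarith
      · rw [abs_of_neg hts] at hfv; linarith
  have hIoc : volume (Set.Ioc (1:ℝ) (1+δ)) = ENNReal.ofReal δ := by
    rw [Real.volume_Ioc]; norm_num
  have hIco : volume (Set.Ico (-(1+δ)) (-1:ℝ)) = ENNReal.ofReal δ := by
    rw [Real.volume_Ico]; norm_num
  have hbound : ENNReal.ofReal 2 ^ n * (ENNReal.ofReal (q 0)⁻¹ * ENNReal.ofReal δ)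
      = ENNReal.ofReal (2 ^ n * (v⁻¹ * δ)) := by
    rw [hq0, ← ENNReal.ofReal_pow (by norm_num), ← ENNReal.ofReal_mul (by positivity),
      ← ENNReal.ofReal_mul (by positivity)]
  have h1 : volume S1 ≤ ENNReal.ofReal (2 ^ n * (v⁻¹ * δ)) := by
    rw [← hbound]
    have := slab_measure q hqpos (Set.Ioc 1 (1+δ)) measurableSet_Ioc
    rwa [hIoc] at this
  have h2 : volume S2 ≤ ENNReal.ofReal (2 ^ n * (v⁻¹ * δ)) := by
    rw [← hbound]
    have := slab_measure q hqpos (Set.Ico (-(1+δ)) (-1)) measurableSet_Ico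
    rwa [hIco] at this
  calc volume (DeltaDom (n+1) u \ DeltaDom (n+1) v) ≤ volume (S1 ∪ S2) := measure_mono hsub
    _ ≤ volume S1 + volume S2 := measure_union_le _ _
    _ ≤ ENNReal.ofReal (2 ^ n * (v⁻¹ * δ)) + ENNReal.ofReal (2 ^ n * (v⁻¹ * δ)) :=
        add_le_add h1 h2
    _ = ENNReal.ofReal (2 * (2 ^ n * (v⁻¹ * δ))) := by
        rw [← ENNReal.ofReal_add (by positivity) (by positivity)]
        congr 1; ring

/-! ### Lower bound for the ball volume and for `K2` -/

lemma ballVol_lower (d : ℕ) (hd : 2 ≤ d) :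
    (2 / Real.sqrt d) ^ (d - 1) ≤ ballVol (d - 1) := by
  set k := d - 1 with hk
  have hk1 : 1 ≤ k := by omega
  have hd0 : (0:ℝ) < d := by positivity
  have hs0 : 0 < Real.sqrt d := Real.sqrt_pos.mpr hd0
  set a : ℝ := 1 / Real.sqrt d with ha
  have ha0 : 0 < a := by positivity
  have hmp := EuclideanSpace.volume_preserving_symm_measurableEquiv_toLp (Fin k)
  set e := (MeasurableEquiv.toLp 2 (Fin k → ℝ)).symm with he
  have hsub : (⇑e) ⁻¹' (Set.Icc (fun _ => -a) (fun _ => a))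
      ⊆ Metric.ball (0 : EuclideanSpace ℝ (Fin k)) 1 := by
    intro v hv
    simp only [Set.mem_preimage, Set.mem_Icc, Pi.le_def] at hv
    rw [Metric.mem_ball, dist_zero_right]
    have hnorm : ‖v‖ = Real.sqrt (∑ i, ‖v i‖ ^ 2) := EuclideanSpace.norm_eq v
    rw [hnorm]
    have hsum : (∑ i, ‖v i‖ ^ 2) ≤ k * a ^ 2 := by
      calc (∑ i, ‖v i‖ ^ 2) ≤ ∑ _i : Fin k, a ^ 2 := by
            apply Finset.sum_le_sum
            intro i _
            have h1 := hv.1 i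
            have h2 := hv.2 i
            rw [Real.norm_eq_abs]
            have : |v i| ≤ a := abs_le.mpr ⟨h1, h2⟩
            nlinarith [abs_nonneg (v i)]
        _ = k * a ^ 2 := by rw [Finset.sum_const]; simp [mul_comm]
    have hka : (k:ℝ) * a ^ 2 < 1 := by
      have h2 : a ^ 2 = 1 / d := by
        rw [ha, div_pow, one_pow, Real.sq_sqrt hd0.le]
      rw [h2, mul_one_div, div_lt_one hd0]
      exact_mod_cast (by omega : k < d)
    calc Real.sqrt (∑ i, ‖v i‖ ^ 2) ≤ Real.sqrt ((k:ℝ) * a ^ 2) := Real.sqrt_le_sqrt hsum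
      _ < 1 := by
          rw [show (1:ℝ) = Real.sqrt 1 by simp]
          exact Real.sqrt_lt_sqrt (by positivity) hka
  have hvol : ENNReal.ofReal (2 * a) ^ k
      ≤ volume (Metric.ball (0 : EuclideanSpace ℝ (Fin k)) 1) := by
    calc ENNReal.ofReal (2 * a) ^ k
        = volume (Set.Icc (fun _ => -a) (fun _ => a) : Set (Fin k → ℝ)) := by
          rw [Real.volume_Icc_pi]
          simp only [sub_neg_eq_add, Finset.prod_const, Finset.card_univ, Fintype.card_fin]
          rw [two_mul]
      _ = volume ((⇑e) ⁻¹' (Set.Icc (fun _ => -a) (fun _ => a))) :=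
          (hmp.measure_preimage measurableSet_Icc.nullMeasurableSet).symm
      _ ≤ volume (Metric.ball (0 : EuclideanSpace ℝ (Fin k)) 1) := measure_mono hsub
  have hfin : volume (Metric.ball (0 : EuclideanSpace ℝ (Fin k)) 1) ≠ ⊤ :=
    (measure_ball_lt_top).ne
  have hle := ENNReal.toReal_mono hfin hvol
  rw [ENNReal.toReal_pow, ENNReal.toReal_ofReal (by positivity)] at hle
  have h2a : (2 / Real.sqrt d) ^ k = (2 * a) ^ k := by
    rw [ha]; ring_nf
  rw [← hk] at *
  rw [h2a]
  exact hle

lemma sqrt_pow_identity (d : ℕ) (hd : 2 ≤ d) :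
    (2 * Real.sqrt d) ^ (d + 3) * (2 / Real.sqrt d) ^ (d - 1)
      = 4 ^ (d + 1) * (d:ℝ) ^ 2 := by
  have hd0 : (0:ℝ) < d := by positivity
  have hs0 : 0 < Real.sqrt d := Real.sqrt_pos.mpr hd0
  have hs2 : Real.sqrt d ^ 2 = (d:ℝ) := Real.sq_sqrt hd0.le
  obtain ⟨k, hk⟩ : ∃ k, d = k + 1 := ⟨d - 1, by omega⟩
  subst hk
  simp only [Nat.add_sub_cancel]
  set s := Real.sqrt ((k+1 : ℕ):ℝ) with hsdef
  have hsk : s ^ k ≠ 0 := pow_ne_zero _ hs0.ne'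
  have h2k : (4:ℝ) ^ k = 2 ^ k * 2 ^ k := by rw [← mul_pow]; norm_num
  calc (2 * s) ^ (k + 1 + 3) * (2 / s) ^ k
      = (2 ^ k * 2 ^ 4) * (s ^ k * s ^ 4) * (2 ^ k / s ^ k) := by
        rw [show k + 1 + 3 = k + 4 by omega, mul_pow, div_pow, pow_add, pow_add]
    _ = (2 ^ k * 2 ^ k) * ((2:ℝ) ^ 4 * s ^ 4) * (s ^ k / s ^ k) := by ring
    _ = (2 ^ k * 2 ^ k) * ((2:ℝ) ^ 4 * s ^ 4) := by rw [div_self hsk, mul_one]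
    _ = 4 ^ k * (16 * (s ^ 2) ^ 2) := by rw [h2k]; ring
    _ = 4 ^ (k + 1 + 1) * (((k+1:ℕ):ℝ)) ^ 2 := by
        rw [hs2, pow_add, pow_add]; ring

lemma two_pow_bound (d : ℕ) : (d : ℝ) ≤ 2 ^ d := by
  exact_mod_cast (Nat.lt_two_pow_self (n := d)).le

lemma K2_lower (d : ℕ) (hd : 2 ≤ d) :
    (2:ℝ) ^ d * ((d:ℝ) * ((d:ℝ) * ((d:ℝ) + 1) / 2))
      + ((d:ℝ) * ((d:ℝ) + 1) / 2) * (2 ^ (d+2) * (d:ℝ) * ((d:ℝ) * ((d:ℝ) + 1) / 2))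
      ≤ K2 d := by
  have hd0 : (0:ℝ) < d := by positivity
  set M : ℝ := (d:ℝ) * ((d:ℝ) + 1) / 2 with hM
  have hM0 : 0 < M := by positivity
  have h1 : (d:ℝ) ≤ 2 ^ d := two_pow_bound d
  have h1' : (d:ℝ) + 1 ≤ 2 ^ (d+1) := by
    have := two_pow_bound (d+1)
    push_cast at this
    linarith
  have h4 : (4:ℝ) ^ d = 2 ^ d * 2 ^ d := by rw [← mul_pow]; norm_num
  have h4' : (4:ℝ) ^ (d+1) = 2 ^ (d+1) * 2 ^ (d+1) := by rw [← mul_pow]; norm_num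
  have key1 : (2:ℝ) ^ d * (d:ℝ) ≤ 4 ^ d := by
    rw [h4]
    exact mul_le_mul_of_nonneg_left h1 (by positivity)
  have key2 : (2:ℝ) ^ (d+2) * (d:ℝ) * M ≤ 4 ^ (d+1) * (d:ℝ) ^ 2 := by
    have e1 : (2:ℝ) ^ (d+2) * (d:ℝ) * M = 2 ^ (d+1) * ((d:ℝ)^2 * ((d:ℝ)+1)) := by
      rw [hM, pow_add, pow_add]; ring
    have e2 : (d:ℝ)^2 * ((d:ℝ)+1) ≤ (d:ℝ)^2 * 2 ^ (d+1) :=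
      mul_le_mul_of_nonneg_left h1' (by positivity)
    rw [e1, h4']
    nlinarith [pow_pos (show (0:ℝ) < 2 by norm_num) (d+1)]
  have key3 : (4:ℝ) ^ (d+1) * (d:ℝ) ^ 2
      ≤ (2 * Real.sqrt d) ^ (d + 3) * ballVol (d - 1) := by
    rw [← sqrt_pow_identity d hd]
    exact mul_le_mul_of_nonneg_left (ballVol_lower d hd) (by positivity)
  have t1 : M * (2 ^ d * (d:ℝ)) ≤ M * 4 ^ d := mul_le_mul_of_nonneg_left key1 hM0.le
  have t2 : M * (2 ^ (d+2) * (d:ℝ) * M)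
      ≤ M * ((2 * Real.sqrt d) ^ (d + 3) * ballVol (d - 1)) :=
    mul_le_mul_of_nonneg_left (key2.trans key3) hM0.le
  rw [K2, ← hM]
  nlinarith [t1, t2]

/-! ### Main Lipschitz estimate (ordered version) -/

lemma rho_lip_aux (d : ℕ) (hd : 2 ≤ d) {x y : ℝ} (hx : x ∈ Set.Icc (0:ℝ) 1)
    (hy : y ∈ Set.Icc (0:ℝ) 1) (hxyle : x ≤ y)
    (hclose : |x - y| ≤ 1 / (2 ^ (d + 1) * (d : ℝ))) :
    |rho d x - rho d y| ≤ K2 d * |x - y| := by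
  obtain ⟨n, rfl⟩ : ∃ n, d = n + 1 := ⟨d - 1, by omega⟩
  set d := n + 1 with hdeq
  have hd0 : (0:ℝ) < d := by positivity
  have habs0 : 0 ≤ |x - y| := abs_nonneg _
  have hM0 : (0:ℝ) < (d:ℝ) * ((d:ℝ) + 1) / 2 := by positivity
  set M : ℝ := (d:ℝ) * ((d:ℝ) + 1) / 2 with hM
  -- Term 1 : same domain, different integrand
  have hIAx : IntegrableOn (gAbs d x) (DeltaDom d x) volume :=
    integrableOn_gAbs x (DeltaDom_subset d x)
  have hIAy : IntegrableOn (gAbs d y) (DeltaDom d x) volume :=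
    integrableOn_gAbs y (DeltaDom_subset d x)
  have hT1 : |(∫ p in DeltaDom d x, gAbs d x p) - ∫ p in DeltaDom d x, gAbs d y p|
      ≤ 2 ^ (d:ℕ) * ((d:ℝ) * M) * |x - y| := by
    rw [← integral_sub hIAx hIAy]
    have hptw : ∀ p ∈ DeltaDom d x, ‖gAbs d x p - gAbs d y p‖ ≤ (d:ℝ) * M * |x - y| := by
      intro p hp
      rw [Real.norm_eq_abs]
      calc |gAbs d x p - gAbs d y p|
          ≤ |(∑ k : Fin d, (((k:ℕ):ℝ) + 1) * p k * x ^ (k:ℕ))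
              - ∑ k : Fin d, (((k:ℕ):ℝ) + 1) * p k * y ^ (k:ℕ)| :=
            abs_abs_sub_abs_le_abs_sub _ _
        _ ≤ (d:ℝ) * ((d:ℝ) * ((d:ℝ) + 1) / 2) * |x - y| := gAbs_lip hx hy hp.1
        _ = (d:ℝ) * M * |x - y| := by rw [hM]
    have hmeas : AEStronglyMeasurable (fun p => gAbs d x p - gAbs d y p)
        (volume.restrict (DeltaDom d x)) :=
      (((continuous_gAbs d x).sub (continuous_gAbs d y)).aestronglyMeasurable).restrict
    have hbd := norm_setIntegral_le_of_norm_le_const (volume_DeltaDom_lt_top d x) hptw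
    rw [Real.norm_eq_abs, measureReal_def] at hbd
    refine hbd.trans ?_
    have hvr : (volume (DeltaDom d x)).toReal ≤ 2 ^ (d:ℕ) :=
      ENNReal.toReal_le_of_le_ofReal (by positivity) (volume_DeltaDom_le d x)
    calc (d:ℝ) * M * |x - y| * (volume (DeltaDom d x)).toReal
        ≤ (d:ℝ) * M * |x - y| * 2 ^ (d:ℕ) :=
          mul_le_mul_of_nonneg_left hvr (by positivity)
      _ = 2 ^ (d:ℕ) * ((d:ℝ) * M) * |x - y| := by ring
  have hKlow := K2_lower d hd
  rw [← hM] at hKlow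
  rcases le_or_gt ((d:ℝ) * y) 1 with hcase | hcase
  · -- small case : both domains equal the full cube
    have hdx : (d:ℝ) * x ≤ 1 := by
      have : (d:ℝ) * x ≤ (d:ℝ) * y := mul_le_mul_of_nonneg_left hxyle hd0.le
      linarith
    have hAx : DeltaDom d x = {p : Fin d → ℝ | ∀ k, |p k| ≤ 1} := by
      ext p
      exact ⟨fun h => h.1, fun h => ⟨h, fSum_small hx hdx h⟩⟩
    have hAy : DeltaDom d y = {p : Fin d → ℝ | ∀ k, |p k| ≤ 1} := by
      ext p
      exact ⟨fun h => h.1, fun h => ⟨h, fSum_small hy hcase h⟩⟩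
    have hAB : DeltaDom d x = DeltaDom d y := hAx.trans hAy.symm
    rw [rho_eq, rho_eq, ← hAB]
    refine hT1.trans ?_
    have hle : 2 ^ (d:ℕ) * ((d:ℝ) * M) ≤ K2 d := by
      have hnn : 0 ≤ M * (2 ^ ((d:ℕ)+2) * (d:ℝ) * M) := by positivity
      linarith
    exact mul_le_mul_of_nonneg_right hle habs0
  · -- main case : x, y ≥ 1/(2d)
    have hy0 : 0 < y := by nlinarith
    have hyd : 1 / (d:ℝ) < y := by rw [div_lt_iff₀ hd0]; linarith
    have hpow2 : (2:ℝ) ≤ 2 ^ ((d:ℕ) + 1) := by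
      calc (2:ℝ) = 2 ^ 1 := by norm_num
        _ ≤ 2 ^ ((d:ℕ) + 1) := pow_le_pow_right₀ (by norm_num) (by omega)
    have hclose' : y - x ≤ 1 / (2 * (d:ℝ)) := by
      have h1 : y - x ≤ 1 / (2 ^ ((d:ℕ) + 1) * (d:ℝ)) := by
        rw [abs_sub_comm, abs_of_nonneg (sub_nonneg.mpr hxyle)] at hclose
        exact hclose
      have h2 : 1 / (2 ^ ((d:ℕ) + 1) * (d:ℝ)) ≤ 1 / (2 * (d:ℝ)) := by
        apply one_div_le_one_div_of_le (by positivity)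
        exact mul_le_mul_of_nonneg_right hpow2 hd0.le
      linarith
    have hx_lb : 1 / (2 * (d:ℝ)) ≤ x := by
      have hid : 1 / (d:ℝ) - 1 / (2 * (d:ℝ)) = 1 / (2 * (d:ℝ)) := by
        field_simp
        ring
      linarith
    have hx0 : 0 < x := lt_of_lt_of_le (by positivity) hx_lb
    have hyinv : y⁻¹ ≤ 2 * d := by
      rw [inv_le_comm₀ (by positivity) (by positivity)]
      calc (2 * (d:ℝ))⁻¹ = 1 / (2 * (d:ℝ)) := by rw [one_div]
        _ ≤ 1 / (d:ℝ) := by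
            apply one_div_le_one_div_of_le hd0
            linarith
        _ ≤ y := hyd.le
    have hxinv : x⁻¹ ≤ 2 * d := by
      rw [inv_le_comm₀ (by positivity) (by positivity)]
      calc (2 * (d:ℝ))⁻¹ = 1 / (2 * (d:ℝ)) := by rw [one_div]
        _ ≤ x := hx_lb
    set δ : ℝ := M * |x - y| with hδ
    have hδ0 : 0 ≤ δ := by positivity
    have hlipxy : ∀ p : Fin (n+1) → ℝ, (∀ k, |p k| ≤ 1) →
        |fSum (n+1) x p - fSum (n+1) y p| ≤ δ := by
      intro p hp
      rw [hδ, hM]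
      exact fSum_lip hx hy hp
    have hlipyx : ∀ p : Fin (n+1) → ℝ, (∀ k, |p k| ≤ 1) →
        |fSum (n+1) y p - fSum (n+1) x p| ≤ δ := by
      intro p hp
      rw [abs_sub_comm]
      exact hlipxy p hp
    have hv1 := vol_diff_le hy0 hδ0 hlipxy
    have hv2 := vol_diff_le hx0 hδ0 hlipyx
    have hcommon : ∀ w : ℝ, w⁻¹ ≤ 2 * d → 0 < w →
        ENNReal.ofReal (2 * (2 ^ n * (w⁻¹ * δ)))
          ≤ ENNReal.ofReal (2 * (2 ^ n * ((2 * (d:ℝ)) * δ))) := by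
      intro w hw hw0
      apply ENNReal.ofReal_le_ofReal
      have : w⁻¹ * δ ≤ (2 * (d:ℝ)) * δ := mul_le_mul_of_nonneg_right hw hδ0
      nlinarith [pow_pos (show (0:ℝ) < 2 by norm_num) n]
    have hVr1 : (volume (DeltaDom d x \ DeltaDom d y)).toReal
        ≤ 2 * (2 ^ n * ((2 * (d:ℝ)) * δ)) :=
      ENNReal.toReal_le_of_le_ofReal (by positivity)
        (hv1.trans (hcommon y hyinv hy0))
    have hVr2 : (volume (DeltaDom d y \ DeltaDom d x)).toReal
        ≤ 2 * (2 ^ n * ((2 * (d:ℝ)) * δ)) :=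
      ENNReal.toReal_le_of_le_ofReal (by positivity)
        (hv2.trans (hcommon x hxinv hx0))
    -- split the integrals
    have hA := measurableSet_DeltaDom d x
    have hB := measurableSet_DeltaDom d y
    have hsubAB : DeltaDom d x ∩ DeltaDom d y ⊆ {p : Fin d → ℝ | ∀ k, |p k| ≤ 1} :=
      (Set.inter_subset_left).trans (DeltaDom_subset d x)
    have hsubAdB : DeltaDom d x \ DeltaDom d y ⊆ {p : Fin d → ℝ | ∀ k, |p k| ≤ 1} :=
      (Set.diff_subset).trans (DeltaDom_subset d x)
    have hsubBdA : DeltaDom d y \ DeltaDom d x ⊆ {p : Fin d → ℝ | ∀ k, |p k| ≤ 1} :=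
      (Set.diff_subset).trans (DeltaDom_subset d y)
    have hsplitA : (∫ p in DeltaDom d x, gAbs d y p)
        = (∫ p in DeltaDom d x ∩ DeltaDom d y, gAbs d y p)
          + ∫ p in DeltaDom d x \ DeltaDom d y, gAbs d y p := by
      conv_lhs => rw [← Set.inter_union_diff (DeltaDom d x) (DeltaDom d y)]
      exact setIntegral_union (Set.disjoint_left.mpr (fun p hp hq => hq.2 hp.2)) (hA.diff hB)
        (integrableOn_gAbs y hsubAB) (integrableOn_gAbs y hsubAdB)
    have hsplitB : (∫ p in DeltaDom d y, gAbs d y p)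
        = (∫ p in DeltaDom d x ∩ DeltaDom d y, gAbs d y p)
          + ∫ p in DeltaDom d y \ DeltaDom d x, gAbs d y p := by
      conv_lhs => rw [← Set.inter_union_diff (DeltaDom d y) (DeltaDom d x),
        Set.inter_comm (DeltaDom d y) (DeltaDom d x)]
      exact setIntegral_union (Set.disjoint_left.mpr (fun p hp hq => hq.2 hp.1)) (hB.diff hA)
        (integrableOn_gAbs y hsubAB) (integrableOn_gAbs y hsubBdA)
    -- bound the two difference integrals
    have hdiffbound : ∀ S : Set (Fin d → ℝ), MeasurableSet S →
        S ⊆ {p : Fin d → ℝ | ∀ k, |p k| ≤ 1} → S ⊆ DeltaDom d x ∪ DeltaDom d y →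
        (0 ≤ ∫ p in S, gAbs d y p) ∧
          (∫ p in S, gAbs d y p) ≤ M * (volume S).toReal := by
      intro S hSm hScube hSsub
      constructor
      · exact setIntegral_nonneg hSm (fun p _ => abs_nonneg _)
      · have hfin : volume S < ⊤ := by
          refine lt_of_le_of_lt (measure_mono hScube) ?_
          rw [cube_eq_Icc, cube_vol]
          exact ENNReal.pow_lt_top ENNReal.ofReal_lt_top
        have hptw : ∀ p ∈ S, ‖gAbs d y p‖ ≤ M := by
          intro p hp
          have h0 : (0:ℝ) ≤ gAbs d y p := abs_nonneg _
          rw [Real.norm_eq_abs, abs_of_nonneg h0, hM]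
          exact gAbs_bound hy (hScube hp)
        have := norm_setIntegral_le_of_norm_le_const hfin hptw
        rw [Real.norm_eq_abs, measureReal_def] at this
        exact (le_abs_self _).trans this
    obtain ⟨hpos1, hle1⟩ := hdiffbound (DeltaDom d x \ DeltaDom d y) (hA.diff hB) hsubAdB
      ((Set.diff_subset).trans Set.subset_union_left)
    obtain ⟨hpos2, hle2⟩ := hdiffbound (DeltaDom d y \ DeltaDom d x) (hB.diff hA) hsubBdA
      ((Set.diff_subset).trans Set.subset_union_right)
    have hIb1 : (∫ p in DeltaDom d x \ DeltaDom d y, gAbs d y p)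
        ≤ M * (2 * (2 ^ n * ((2 * (d:ℝ)) * δ))) :=
      hle1.trans (mul_le_mul_of_nonneg_left hVr1 hM0.le)
    have hIb2 : (∫ p in DeltaDom d y \ DeltaDom d x, gAbs d y p)
        ≤ M * (2 * (2 ^ n * ((2 * (d:ℝ)) * δ))) :=
      hle2.trans (mul_le_mul_of_nonneg_left hVr2 hM0.le)
    -- assemble
    have hdecomp : rho d x - rho d y
        = ((∫ p in DeltaDom d x, gAbs d x p) - ∫ p in DeltaDom d x, gAbs d y p)
          + ((∫ p in DeltaDom d x \ DeltaDom d y, gAbs d y p)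
            - ∫ p in DeltaDom d y \ DeltaDom d x, gAbs d y p) := by
      rw [rho_eq, rho_eq]
      rw [hsplitB]
      have := hsplitA
      linarith
    have hterm2 : |(∫ p in DeltaDom d x \ DeltaDom d y, gAbs d y p)
        - ∫ p in DeltaDom d y \ DeltaDom d x, gAbs d y p|
        ≤ 2 * (M * (2 * (2 ^ n * ((2 * (d:ℝ)) * δ)))) := by
      rw [abs_sub_le_iff]
      constructor <;> linarith
    have htotal : |rho d x - rho d y|
        ≤ 2 ^ (d:ℕ) * ((d:ℝ) * M) * |x - y|
          + 2 * (M * (2 * (2 ^ n * ((2 * (d:ℝ)) * δ)))) := by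
      rw [hdecomp]
      calc |_ + _| ≤ _ := abs_add_le _ _
        _ ≤ _ := add_le_add hT1 hterm2
    refine htotal.trans ?_
    have hrhs : 2 * (M * (2 * (2 ^ n * ((2 * (d:ℝ)) * δ))))
        = M * (2 ^ ((d:ℕ) + 2) * (d:ℝ) * M) * |x - y| := by
      rw [hδ, hdeq]
      push_cast
      ring
    rw [hrhs]
    have := mul_le_mul_of_nonneg_right hKlow habs0
    linarith

theorem stmt7 (d : ℕ) (hd : 2 ≤ d) :
    ∀ x ∈ Set.Icc (0 : ℝ) 1, ∀ y ∈ Set.Icc (0 : ℝ) 1,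
      |x - y| ≤ 1 / (2 ^ (d + 1) * (d : ℝ)) →
      |rho d x - rho d y| ≤ K2 d * |x - y| := by
  intro x hx y hy hclose
  rcases le_total x y with hle | hle
  · exact rho_lip_aux d hd hx hy hle hclose
  · rw [abs_sub_comm x y] at hclose ⊢
    rw [abs_sub_comm (rho d x) (rho d y)]
    exact rho_lip_aux d hd hy hx hle hclose
end
end

section
/- Assume the general counting-measure setup, and let Ψ be an approximation function and Q₂ > Q₁ ≥ 1 integers. If len*(J̃_Ψ(Q₁,Q₂)) = 0 then J_Ψ(Q₁,Q₂) = [0,1]. If δ ∈ (0,1) and 0 < len*(J̃_Ψ(Q₁,Q₂)) < ν_ρ(δ), then for every integer H ≥ 1, writing L = len*(J̃_Ψ(Q₁,Q₂)): 1 − μ_H(J_Ψ(Q₁,Q₂)) ≤ 4·∫_{J̃_Ψ(Q₁,Q₂)} ρ + T + 4·|J̃_Ψ(Q₁,Q₂)|·η_ρ(L), where T = (8δ/(1−δ) + E(H)/(L·min_{[0,1]} ρ))·(|J̃_Ψ(Q₁,Q₂)|·η_ρ(L) + ∫_{J̃_Ψ(Q₁,Q₂)} ρ) and |·| denotes Lebesgue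 measure. -/
open MeasureTheory Set

noncomputable section

def muH (X : ℕ → Finset ℝ) (H : ℕ) (A : Set ℝ) : ℝ :=
  (∑ α ∈ X H, Set.indicator A (fun _ => (1 : ℝ)) (Int.fract α)) / ((X H).card : ℝ)

def IsApproxFun (Ψ : ℝ → ℝ) : Prop :=
  (∀ x : ℝ, 0 < x → 0 < Ψ x) ∧ AntitoneOn Ψ (Set.Ioi 0) ∧
    Filter.Tendsto Ψ Filter.atTop (nhds 0)

def JPsi (Ψ : ℝ → ℝ) (Q₁ Q₂ : ℕ) : Set ℝ :=
  ⋃ q ∈ Finset.Ico Q₁ Q₂, ⋃ p ∈ Finset.range (q + 1),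
    Set.Icc ((p : ℝ) / q - Ψ q / q) ((p : ℝ) / q + Ψ q / q) ∩ Set.Icc 0 1

def JTilde (Ψ : ℝ → ℝ) (Q₁ Q₂ : ℕ) : Set ℝ :=
  closure (Set.Icc 0 1 \ JPsi Ψ Q₁ Q₂)

def lenStar (S : Set ℝ) : ℝ :=
  sInf ((fun x => (volume (connectedComponentIn S x)).toReal) '' S)

def etaMod (f : ℝ → ℝ) (ε : ℝ) : ℝ :=
  sInf {η : ℝ | 0 < η ∧ ∀ x ∈ Set.Icc (0 : ℝ) 1, ∀ y ∈ Set.Icc (0 : ℝ) 1,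
    |x - y| ≤ ε → |f x - f y| ≤ η}

def nuMod (f : ℝ → ℝ) (δ : ℝ) : ℝ :=
  sSup {ε : ℝ | 0 < ε ∧ etaMod f ε ≤ δ * sInf (f '' Set.Icc 0 1)}

lemma jpsi_subset (Ψ : ℝ → ℝ) (Q₁ Q₂ : ℕ) : JPsi Ψ Q₁ Q₂ ⊆ Set.Icc 0 1 := by
  intro x hx
  simp only [JPsi, Set.mem_iUnion, Set.mem_inter_iff] at hx
  obtain ⟨q, _, p, _, hx⟩ := hx
  exact hx.2

lemma jtilde_subset (Ψ : ℝ → ℝ) (Q₁ Q₂ : ℕ) : JTilde Ψ Q₁ Q₂ ⊆ Set.Icc 0 1 :=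
  closure_minimal Set.diff_subset isClosed_Icc

lemma jtilde_struct (Ψ : ℝ → ℝ) (hΨ : IsApproxFun Ψ) (Q₁ Q₂ : ℕ)
    (hQ₁ : 1 ≤ Q₁) (hQ : Q₁ < Q₂) :
    ∃ P : Set (ℝ × ℝ), P.Finite ∧ (∃ c > 0, ∀ ab ∈ P, c ≤ ab.2 - ab.1) ∧
      (∀ ab ∈ P, ab.1 < ab.2 ∧ Set.Icc ab.1 ab.2 ⊆ JTilde Ψ Q₁ Q₂) ∧
      JTilde Ψ Q₁ Q₂ ⊆ ⋃ ab ∈ P, Set.Icc ab.1 ab.2 ∧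
      (Set.Icc 0 1 \ JPsi Ψ Q₁ Q₂) ⊆ ⋃ ab ∈ P, Set.Icc ab.1 ab.2 := by
  classical
  set J := JPsi Ψ Q₁ Q₂ with hJdef
  set U : Set ℝ := Set.Icc 0 1 \ J with hUdef
  set T : Finset ℝ := insert 0 (insert 1 ((Finset.Ico Q₁ Q₂).biUnion fun q =>
    (Finset.range (q+1)).biUnion fun p =>
      {(p:ℝ)/q - Ψ q/q, (p:ℝ)/q + Ψ q/q})) with hTdef
  have hΨq : ∀ q : ℕ, q ∈ Finset.Ico Q₁ Q₂ → 0 < Ψ q / q := by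
    intro q hq
    have hq1 : 1 ≤ q := le_trans hQ₁ (Finset.mem_Ico.1 hq).1
    have hq0 : (0:ℝ) < q := by exact_mod_cast Nat.lt_of_lt_of_le Nat.zero_lt_one hq1
    exact div_pos (hΨ.1 _ hq0) hq0
  have hmemJ : ∀ (q : ℕ), q ∈ Finset.Ico Q₁ Q₂ → ∀ (p : ℕ), p ∈ Finset.range (q+1) →
      ∀ x : ℝ, x ∈ Set.Icc ((p:ℝ)/q - Ψ q/q) ((p:ℝ)/q + Ψ q/q) → x ∈ Set.Icc (0:ℝ) 1 → x ∈ J := by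
    intro q hq p hp x hx hx01
    simp only [hJdef, JPsi, Set.mem_iUnion]
    exact ⟨q, hq, p, hp, hx, hx01⟩
  have hQ₁mem : Q₁ ∈ Finset.Ico Q₁ Q₂ := Finset.mem_Ico.2 ⟨le_rfl, hQ⟩
  have hQ₁pos : (0:ℝ) < (Q₁:ℝ) := by exact_mod_cast Nat.lt_of_lt_of_le Nat.zero_lt_one hQ₁
  have hTJ : ∀ t ∈ T, t ∈ Set.Icc (0:ℝ) 1 → t ∈ J := by
    intro t ht ht01
    simp only [hTdef, Finset.mem_insert, Finset.mem_biUnion, Finset.mem_insert,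
      Finset.mem_singleton] at ht
    have hw := hΨq Q₁ hQ₁mem
    rcases ht with rfl | rfl | ⟨q, hq, p, hp, rfl | rfl⟩
    · refine hmemJ Q₁ hQ₁mem 0 (Finset.mem_range.2 (Nat.succ_pos _)) 0 ?_ ht01
      simp only [Nat.cast_zero, zero_div, zero_sub, zero_add]
      exact ⟨le_of_lt (neg_neg_iff_pos.mpr hw), le_of_lt hw⟩
    · refine hmemJ Q₁ hQ₁mem Q₁ (Finset.mem_range.2 (Nat.lt_succ_self _)) 1 ?_ ht01
      have : (Q₁:ℝ)/Q₁ = 1 := div_self (ne_of_gt hQ₁pos)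
      rw [this]
      constructor <;> nlinarith [hw]
    · exact hmemJ q hq p hp _ ⟨le_rfl, by nlinarith [hΨq q hq]⟩ ht01
    · exact hmemJ q hq p hp _ ⟨by nlinarith [hΨq q hq], le_rfl⟩ ht01
  have hendT : ∀ (q : ℕ), q ∈ Finset.Ico Q₁ Q₂ → ∀ (p : ℕ), p ∈ Finset.range (q+1) →
      ((p:ℝ)/q - Ψ q/q) ∈ T ∧ ((p:ℝ)/q + Ψ q/q) ∈ T := by
    intro q hq p hp
    constructor <;>
    · simp only [hTdef, Finset.mem_insert, Finset.mem_biUnion, Finset.mem_singleton]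
      exact Or.inr (Or.inr ⟨q, hq, p, hp, by tauto⟩)
  have h0T : (0:ℝ) ∈ T := Finset.mem_insert_self _ _
  have h1T : (1:ℝ) ∈ T := Finset.mem_insert_of_mem (Finset.mem_insert_self _ _)
  have hgood : ∀ u ∈ U, ∃ a b : ℝ, a ∈ T ∧ b ∈ T ∧ a < b ∧ u ∈ Set.Ioo a b ∧
      Set.Ioo a b ⊆ U := by
    intro u hu
    obtain ⟨hu01, huJ⟩ := hu
    have hu_notT : u ∉ T := fun h => huJ (hTJ u h hu01)
    set A : Finset ℝ := T.filter (· ≤ u) with hAdef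
    set B : Finset ℝ := T.filter (u ≤ ·) with hBdef
    have h0A : (0:ℝ) ∈ A := Finset.mem_filter.2 ⟨h0T, hu01.1⟩
    have h1B : (1:ℝ) ∈ B := Finset.mem_filter.2 ⟨h1T, hu01.2⟩
    have hA : A.Nonempty := ⟨0, h0A⟩
    have hB : B.Nonempty := ⟨1, h1B⟩
    set a := A.max' hA with ha
    set b := B.min' hB with hb
    have haA := A.max'_mem hA
    have hbB := B.min'_mem hB
    have haT : a ∈ T := (Finset.mem_filter.1 haA).1
    have hbT : b ∈ T := (Finset.mem_filter.1 hbB).1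
    have hau : a ≤ u := (Finset.mem_filter.1 haA).2
    have hub : u ≤ b := (Finset.mem_filter.1 hbB).2
    have ha0 : 0 ≤ a := A.le_max' 0 h0A
    have hb1 : b ≤ 1 := B.min'_le 1 h1B
    have hau' : a < u := lt_of_le_of_ne hau (fun h => hu_notT (h ▸ haT))
    have hub' : u < b := lt_of_le_of_ne hub (fun h => hu_notT (h ▸ hbT))
    refine ⟨a, b, haT, hbT, lt_trans hau' hub', ⟨hau', hub'⟩, ?_⟩
    intro v hv
    refine ⟨⟨le_of_lt (lt_of_le_of_lt ha0 hv.1), le_of_lt (lt_of_lt_of_le hv.2 hb1)⟩, ?_⟩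
    intro hvJ
    simp only [hJdef, JPsi, Set.mem_iUnion, Set.mem_inter_iff] at hvJ
    obtain ⟨q, hq, p, hp, hvI, hv01⟩ := hvJ
    have huI : u ∉ Set.Icc ((p:ℝ)/q - Ψ q/q) ((p:ℝ)/q + Ψ q/q) := by
      intro h
      exact huJ (hmemJ q hq p hp u h hu01)
    rw [Set.mem_Icc, not_and_or, not_le, not_le] at huI
    obtain ⟨hlT, hrT⟩ := hendT q hq p hp
    rcases huI with h | h
    · -- u < left endpoint l, so b ≤ l ≤ v < b
      have : b ≤ (p:ℝ)/q - Ψ q/q := B.min'_le _ (Finset.mem_filter.2 ⟨hlT, le_of_lt h⟩)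
      exact absurd (lt_of_lt_of_le hv.2 (le_trans this hvI.1)) (lt_irrefl _)
    · -- right endpoint r < u, so v ≤ r ≤ a < v
      have : (p:ℝ)/q + Ψ q/q ≤ a := A.le_max' _ (Finset.mem_filter.2 ⟨hrT, le_of_lt h⟩)
      exact absurd (lt_of_lt_of_le hv.1 (le_trans hvI.2 this)) (lt_irrefl _)
  set P : Set (ℝ × ℝ) := {ab | ab.1 ∈ T ∧ ab.2 ∈ T ∧ ab.1 < ab.2 ∧ Set.Ioo ab.1 ab.2 ⊆ U}
    with hPdef
  have hPfin : P.Finite := by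
    apply Set.Finite.subset ((T ×ˢ T).finite_toSet)
    rintro ⟨x, y⟩ ⟨hx, hy, -, -⟩
    simp only [Finset.coe_product, Set.mem_prod, Finset.mem_coe]
    exact ⟨hx, hy⟩
  have hUcov : U ⊆ ⋃ ab ∈ P, Set.Ioo ab.1 ab.2 := by
    intro u hu
    obtain ⟨a, b, haT, hbT, hab, huab, hsub⟩ := hgood u hu
    exact Set.mem_biUnion (show (a, b) ∈ P from ⟨haT, hbT, hab, hsub⟩) huab
  have hIccK : ∀ ab ∈ P, Set.Icc ab.1 ab.2 ⊆ JTilde Ψ Q₁ Q₂ := by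
    rintro ⟨a, b⟩ ⟨-, -, hab, hsub⟩
    have : Set.Icc a b = closure (Set.Ioo a b) := (closure_Ioo (ne_of_lt hab)).symm
    rw [this]
    exact closure_mono hsub
  have hUcov' : U ⊆ ⋃ ab ∈ P, Set.Icc ab.1 ab.2 :=
    hUcov.trans (Set.iUnion₂_mono fun ab _ => Set.Ioo_subset_Icc_self)
  have hKcov : JTilde Ψ Q₁ Q₂ ⊆ ⋃ ab ∈ P, Set.Icc ab.1 ab.2 := by
    apply closure_minimal hUcov'
    exact Set.Finite.isClosed_biUnion hPfin (fun _ _ => isClosed_Icc)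
  refine ⟨P, hPfin, ?_, fun ab hab => ⟨hab.2.2.1, hIccK ab hab⟩, hKcov, hUcov'⟩
  rcases P.eq_empty_or_nonempty with hP | hP
  · exact ⟨1, one_pos, by simp [hP]⟩
  · set Fp := hPfin.toFinset with hFp
    have hFpne : Fp.Nonempty := by
      rwa [hFp, Set.Finite.toFinset_nonempty]
    set D := Fp.image (fun ab : ℝ × ℝ => ab.2 - ab.1) with hD
    have hDne : D.Nonempty := hFpne.image _
    refine ⟨D.min' hDne, ?_, ?_⟩
    · obtain ⟨ab, habFp, habeq⟩ := Finset.mem_image.1 (D.min'_mem hDne)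
      have : ab ∈ P := (Set.Finite.mem_toFinset hPfin).1 habFp
      rw [← habeq]
      linarith [this.2.2.1]
    · intro ab hab
      exact D.min'_le _ (Finset.mem_image.2 ⟨ab, (Set.Finite.mem_toFinset hPfin).2 hab, rfl⟩)

theorem stmt11
    (X : ℕ → Finset ℝ) (hX : ∀ H : ℕ, 1 ≤ H → (X H).Nonempty)
    (ρ : ℝ → ℝ) (hρc : ContinuousOn ρ (Set.Icc 0 1))
    (hρpos : ∀ x ∈ Set.Icc (0 : ℝ) 1, 0 < ρ x)
    (hρ1 : (∫ x in (0 : ℝ)..1, ρ x) = 1)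
    (E : ℕ → ℝ) (hE0 : ∀ H, 0 ≤ E H)
    (hE : ∀ H : ℕ, 1 ≤ H → ∀ I : Set ℝ, I ⊆ Set.Icc 0 1 → I.OrdConnected →
      |muH X H I - ∫ x in I, ρ x| ≤ E H)
    (Ψ : ℝ → ℝ) (hΨ : IsApproxFun Ψ)
    (Q₁ Q₂ : ℕ) (hQ₁ : 1 ≤ Q₁) (hQ : Q₁ < Q₂) :
    (lenStar (JTilde Ψ Q₁ Q₂) = 0 → JPsi Ψ Q₁ Q₂ = Set.Icc 0 1) ∧
    (∀ δ : ℝ, δ ∈ Set.Ioo (0 : ℝ) 1 →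
      0 < lenStar (JTilde Ψ Q₁ Q₂) → lenStar (JTilde Ψ Q₁ Q₂) < nuMod ρ δ →
      ∀ H : ℕ, 1 ≤ H →
        1 - muH X H (JPsi Ψ Q₁ Q₂) ≤
          4 * (∫ x in JTilde Ψ Q₁ Q₂, ρ x) +
          (8 * δ / (1 - δ) +
              E H / (lenStar (JTilde Ψ Q₁ Q₂) * sInf (ρ '' Set.Icc 0 1))) *
            ((volume (JTilde Ψ Q₁ Q₂)).toReal * etaMod ρ (lenStar (JTilde Ψ Q₁ Q₂)) +
              ∫ x in JTilde Ψ Q₁ Q₂, ρ x) +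
          4 * (volume (JTilde Ψ Q₁ Q₂)).toReal * etaMod ρ (lenStar (JTilde Ψ Q₁ Q₂))) := by
  classical
  obtain ⟨P, hPfin, ⟨c, hc0, hcP⟩, hPprop, hKcov, hUcov⟩ := jtilde_struct Ψ hΨ Q₁ Q₂ hQ₁ hQ
  have hK01 : JTilde Ψ Q₁ Q₂ ⊆ Set.Icc 0 1 := jtilde_subset Ψ Q₁ Q₂
  have hJ01 : JPsi Ψ Q₁ Q₂ ⊆ Set.Icc 0 1 := jpsi_subset Ψ Q₁ Q₂
  constructor
  · -- Part 1
    intro hlen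
    refine Set.Subset.antisymm hJ01 ?_
    intro x hx
    by_contra hxJ
    have hxK : x ∈ JTilde Ψ Q₁ Q₂ := subset_closure ⟨hx, hxJ⟩
    have hlb : ∀ v ∈ (fun x => (volume (connectedComponentIn (JTilde Ψ Q₁ Q₂) x)).toReal) ''
        (JTilde Ψ Q₁ Q₂), c ≤ v := by
      rintro v ⟨y, hy, rfl⟩
      obtain ⟨ab, habP, hyI⟩ := Set.mem_iUnion₂.1 (hKcov hy)
      have hIccsub : Set.Icc ab.1 ab.2 ⊆ JTilde Ψ Q₁ Q₂ := (hPprop ab habP).2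
      have hsub : Set.Icc ab.1 ab.2 ⊆ connectedComponentIn (JTilde Ψ Q₁ Q₂) y :=
        isPreconnected_Icc.subset_connectedComponentIn hyI hIccsub
      have hne : volume (connectedComponentIn (JTilde Ψ Q₁ Q₂) y) ≠ ⊤ := by
        refine ne_of_lt (lt_of_le_of_lt
          (measure_mono ((connectedComponentIn_subset _ _).trans hK01)) ?_)
        rw [Real.volume_Icc]
        exact ENNReal.ofReal_lt_top
      have h1 : volume (Set.Icc ab.1 ab.2) ≤ volume (connectedComponentIn (JTilde Ψ Q₁ Q₂) y) :=
        measure_mono hsub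
      rw [Real.volume_Icc] at h1
      have h2 := ENNReal.toReal_mono hne h1
      rw [ENNReal.toReal_ofReal (by linarith [(hPprop ab habP).1, hcP ab habP] : (0:ℝ) ≤ ab.2 - ab.1)] at h2
      exact le_trans (hcP ab habP) h2
    have hge : c ≤ lenStar (JTilde Ψ Q₁ Q₂) := le_csInf ⟨_, ⟨x, hxK, rfl⟩⟩ hlb
    rw [hlen] at hge
    linarith
  · -- Part 2
    intro δ hδ hL0 _ H hH
    set K := JTilde Ψ Q₁ Q₂ with hKdef
    set J := JPsi Ψ Q₁ Q₂ with hJdef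
    set L := lenStar K with hLdef
    set m := sInf (ρ '' Set.Icc (0:ℝ) 1) with hmdef
    have hKc : IsClosed K := isClosed_closure
    have hKcomp : IsCompact K := isCompact_Icc.of_isClosed_subset hKc hK01
    have himg : IsCompact (ρ '' Set.Icc (0:ℝ) 1) := isCompact_Icc.image_of_continuousOn hρc
    have himgne : (ρ '' Set.Icc (0:ℝ) 1).Nonempty :=
      ⟨ρ 0, 0, by simp, rfl⟩
    have hmpos : 0 < m := by
      obtain ⟨x₀, hx₀, hx₀e⟩ := himg.sInf_mem himgne
      rw [hmdef, ← hx₀e]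
      exact hρpos x₀ hx₀
    have hmle : ∀ x ∈ Set.Icc (0:ℝ) 1, m ≤ ρ x := fun x hx =>
      csInf_le himg.bddBelow ⟨x, hx, rfl⟩
    have hInt : IntegrableOn ρ K volume :=
      ContinuousOn.integrableOn_compact hKcomp (hρc.mono hK01)
    -- components
    have hSfin : (connectedComponentIn K '' K).Finite := by
      apply Set.Finite.subset (hPfin.image (fun ab : ℝ × ℝ => connectedComponentIn K ab.1))
      rintro C ⟨y, hy, rfl⟩
      obtain ⟨ab, habP, hyI⟩ := Set.mem_iUnion₂.1 (hKcov hy)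
      have hsub : Set.Icc ab.1 ab.2 ⊆ connectedComponentIn K y :=
        isPreconnected_Icc.subset_connectedComponentIn hyI (hPprop ab habP).2
      have ha1 : ab.1 ∈ connectedComponentIn K y := hsub ⟨le_rfl, (hPprop ab habP).1.le⟩
      exact ⟨ab, habP, (connectedComponentIn_eq ha1).symm⟩
    set Fs := hSfin.toFinset with hFsdef
    have hmemFs : ∀ C ∈ Fs, ∃ y ∈ K, connectedComponentIn K y = C := by
      intro C hC
      obtain ⟨y, hy, he⟩ := (Set.Finite.mem_toFinset hSfin).1 hC
      exact ⟨y, hy, he⟩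
    have hCsub : ∀ C ∈ Fs, C ⊆ K := by
      intro C hC
      obtain ⟨y, hy, rfl⟩ := hmemFs C hC
      exact connectedComponentIn_subset _ _
    have hCord : ∀ C ∈ Fs, Set.OrdConnected C := by
      intro C hC
      obtain ⟨y, hy, rfl⟩ := hmemFs C hC
      exact isPreconnected_connectedComponentIn.ordConnected
    have hCmeas : ∀ C ∈ Fs, MeasurableSet C := fun C hC => (hCord C hC).measurableSet
    have hCvol : ∀ C ∈ Fs, volume C ≠ ⊤ := by
      intro C hC
      refine ne_of_lt (lt_of_le_of_lt (measure_mono ((hCsub C hC).trans hK01)) ?_)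
      rw [Real.volume_Icc]
      exact ENNReal.ofReal_lt_top
    have hdisj : (↑Fs : Set (Set ℝ)).Pairwise (Function.onFun Disjoint (fun C : Set ℝ => C)) := by
      intro C hC C' hC' hne
      rw [hFsdef, Set.Finite.coe_toFinset] at hC hC'
      obtain ⟨y, hy, rfl⟩ := hC
      obtain ⟨y', hy', rfl⟩ := hC'
      simp only [Function.onFun]
      rw [Set.disjoint_left]
      intro z hz hz'
      exact hne ((connectedComponentIn_eq hz).trans (connectedComponentIn_eq hz').symm)
    have hKun : K = ⋃ C ∈ Fs, (fun C : Set ℝ => C) C := by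
      apply Set.Subset.antisymm
      · intro x hx
        exact Set.mem_biUnion ((Set.Finite.mem_toFinset hSfin).2 ⟨x, hx, rfl⟩)
          (mem_connectedComponentIn hx)
      · intro x hx
        obtain ⟨C, hC, hxC⟩ := Set.mem_iUnion₂.1 hx
        exact hCsub C hC hxC
    have hIsum : (∫ x in K, ρ x) = ∑ C ∈ Fs, ∫ x in C, ρ x := by
      conv_lhs => rw [hKun]
      exact MeasureTheory.integral_biUnion_finset Fs hCmeas hdisj
        (fun C hC => hInt.mono_set (hCsub C hC))
    have hLle : ∀ C ∈ Fs, L ≤ (volume C).toReal := by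
      intro C hC
      obtain ⟨y, hy, rfl⟩ := hmemFs C hC
      exact csInf_le ⟨0, by rintro v ⟨x, hx, rfl⟩; exact ENNReal.toReal_nonneg⟩ ⟨y, hy, rfl⟩
    have hintC : ∀ C ∈ Fs, m * L ≤ ∫ x in C, ρ x := by
      intro C hC
      have h1 : m * (volume C).toReal ≤ ∫ x in C, ρ x :=
        MeasureTheory.setIntegral_ge_of_const_le_real (hCmeas C hC) (hCvol C hC)
          (fun x hx => hmle x (hK01 (hCsub C hC hx))) (hInt.mono_set (hCsub C hC))
      have h2 : m * L ≤ m * (volume C).toReal :=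
        mul_le_mul_of_nonneg_left (hLle C hC) hmpos.le
      linarith
    have hmuC : ∀ C ∈ Fs, muH X H C ≤ (∫ x in C, ρ x) + E H := by
      intro C hC
      have := abs_le.1 (hE H hH C ((hCsub C hC).trans hK01) (hCord C hC))
      linarith [this.2]
    have hcount : ((Fs.card : ℝ)) * (m * L) ≤ ∫ x in K, ρ x := by
      rw [hIsum]
      calc ((Fs.card : ℝ)) * (m * L) = ∑ _C ∈ Fs, m * L := by
            rw [Finset.sum_const, nsmul_eq_mul]
      _ ≤ ∑ C ∈ Fs, ∫ x in C, ρ x := Finset.sum_le_sum hintC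
    -- muH computations
    have hcard0 : ((X H).card : ℝ) ≠ 0 := by
      exact_mod_cast (Finset.card_pos.2 (hX H hH)).ne'
    have hcardpos : (0:ℝ) < ((X H).card : ℝ) :=
      lt_of_le_of_ne (Nat.cast_nonneg _) (Ne.symm hcard0)
    have hfract : ∀ α : ℝ, Int.fract α ∈ Set.Icc (0:ℝ) 1 := fun α =>
      ⟨Int.fract_nonneg α, (Int.fract_lt_one α).le⟩
    have hmuIcc : muH X H (Set.Icc 0 1) = 1 := by
      unfold muH
      rw [Finset.sum_congr rfl (fun α _ => Set.indicator_of_mem (hfract α) _)]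
      rw [Finset.sum_const, nsmul_eq_mul, mul_one, div_self hcard0]
    have hmu_split : muH X H J + muH X H (Set.Icc 0 1 \ J) = muH X H (Set.Icc 0 1) := by
      unfold muH
      rw [← add_div]
      congr 1
      rw [← Finset.sum_add_distrib]
      refine Finset.sum_congr rfl fun α _ => ?_
      by_cases h : Int.fract α ∈ J
      · rw [Set.indicator_of_mem h,
          Set.indicator_of_notMem (show Int.fract α ∉ Set.Icc (0:ℝ) 1 \ J from fun hc => hc.2 h),
          Set.indicator_of_mem (hJ01 h), add_zero]
      · rw [Set.indicator_of_notMem h, zero_add]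
        by_cases h2 : Int.fract α ∈ Set.Icc (0:ℝ) 1
        · rw [Set.indicator_of_mem (show Int.fract α ∈ Set.Icc (0:ℝ) 1 \ J from ⟨h2, h⟩),
            Set.indicator_of_mem h2]
        · rw [Set.indicator_of_notMem (show Int.fract α ∉ Set.Icc (0:ℝ) 1 \ J from
            fun hc => h2 hc.1), Set.indicator_of_notMem h2]
    have hmono : muH X H (Set.Icc 0 1 \ J) ≤ muH X H K := by
      unfold muH
      refine div_le_div_of_nonneg_right (Finset.sum_le_sum fun α _ => ?_) hcardpos.le
      exact Set.indicator_le_indicator_of_subset subset_closure (fun _ => zero_le_one) _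
    have hmusum : muH X H K ≤ ∑ C ∈ Fs, muH X H C := by
      have hpt : ∀ x : ℝ, Set.indicator K (fun _ => (1:ℝ)) x ≤
          ∑ C ∈ Fs, Set.indicator C (fun _ => (1:ℝ)) x := by
        intro x
        by_cases hx : x ∈ K
        · rw [Set.indicator_of_mem hx]
          have hCF : connectedComponentIn K x ∈ Fs :=
            (Set.Finite.mem_toFinset hSfin).2 ⟨x, hx, rfl⟩
          calc (1:ℝ) = Set.indicator (connectedComponentIn K x) (fun _ => (1:ℝ)) x :=
                (Set.indicator_of_mem (mem_connectedComponentIn hx) (fun _ => (1:ℝ))).symm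
            _ ≤ ∑ C ∈ Fs, Set.indicator C (fun _ => (1:ℝ)) x :=
                Finset.single_le_sum (f := fun C : Set ℝ => Set.indicator C (fun _ => (1:ℝ)) x)
                  (fun C _ => Set.indicator_nonneg (fun _ _ => zero_le_one) _) hCF
        · rw [Set.indicator_of_notMem hx]
          exact Finset.sum_nonneg fun C _ => Set.indicator_nonneg (fun _ _ => zero_le_one) _
      have hnum : ∑ α ∈ X H, Set.indicator K (fun _ => (1:ℝ)) (Int.fract α) ≤
          ∑ C ∈ Fs, ∑ α ∈ X H, Set.indicator C (fun _ => (1:ℝ)) (Int.fract α) := by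
        rw [Finset.sum_comm]
        exact Finset.sum_le_sum fun α _ => hpt _
      unfold muH
      rw [← Finset.sum_div]
      exact div_le_div_of_nonneg_right hnum hcardpos.le
    -- final assembly
    have hfinal : 1 - muH X H J ≤ (∫ x in K, ρ x) + (Fs.card : ℝ) * E H := by
      have h4 : ∑ C ∈ Fs, muH X H C ≤ ∑ C ∈ Fs, ((∫ x in C, ρ x) + E H) :=
        Finset.sum_le_sum hmuC
      rw [Finset.sum_add_distrib, ← hIsum, Finset.sum_const, nsmul_eq_mul] at h4
      linarith [hmu_split, hmuIcc, hmono, hmusum, h4]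
    have hI0 : 0 ≤ ∫ x in K, ρ x :=
      setIntegral_nonneg hKc.measurableSet fun x hx => (hρpos x (hK01 hx)).le
    have hη0 : 0 ≤ etaMod ρ L := Real.sInf_nonneg fun x hx => hx.1.le
    have hV0 : 0 ≤ (volume K).toReal := ENNReal.toReal_nonneg
    have hml : 0 < L * m := mul_pos hL0 hmpos
    have hnE : ((Fs.card : ℝ)) * E H ≤ E H / (L * m) * (∫ x in K, ρ x) := by
      rw [div_mul_eq_mul_div, le_div_iff₀ hml]
      nlinarith [mul_le_mul_of_nonneg_right hcount (hE0 H), hE0 H]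
    have hA1 : 0 ≤ 8 * δ / (1 - δ) := by
      apply div_nonneg
      · linarith [hδ.1]
      · linarith [hδ.2]
    have hA4 : 0 ≤ E H / (L * m) := div_nonneg (hE0 H) hml.le
    have hexp : (8 * δ / (1 - δ) + E H / (L * m)) *
        ((volume K).toReal * etaMod ρ L + ∫ x in K, ρ x) =
        (8 * δ / (1 - δ)) * ((volume K).toReal * etaMod ρ L + ∫ x in K, ρ x) +
        (E H / (L * m)) * ((volume K).toReal * etaMod ρ L) +
        (E H / (L * m)) * (∫ x in K, ρ x) := by ring
    rw [hexp]
    nlinarith [mul_nonneg hA1 (add_nonneg (mul_nonneg hV0 hη0) hI0),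
      mul_nonneg hA4 (mul_nonneg hV0 hη0), mul_nonneg hV0 hη0]
end
end

section
/- Assume the general counting-measure setup. Let H ≥ 1 be an integer and δ ∈ (0,1). Then for any subinterval I ⊂ [0,1] with 0 < |I| < ν_ρ(δ), one has |(1/|I|)·∫_I (1/ρ(x)) dμ_H(x) − 1| ≤ 2δ/(1−δ) + E(H)/(|I|·min_{[0,1]} ρ), where |I| denotes the length of I. -/
open MeasureTheory Set

noncomputable section

/-- The integral `∫_I (1/ρ(x)) dμ_H(x)` of `1/ρ` over `I` against the discrete measure `μ_H`. -/
def intInvRho (X : ℕ → Finset ℝ) (H : ℕ) (I : Set ℝ) (ρ : ℝ → ℝ) : ℝ :=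
  (∑ α ∈ X H, Set.indicator I (fun x => 1 / ρ x) (Int.fract α)) / ((X H).card : ℝ)

theorem stmt13
    (X : ℕ → Finset ℝ) (hX : ∀ H : ℕ, 1 ≤ H → (X H).Nonempty)
    (ρ : ℝ → ℝ) (hρc : ContinuousOn ρ (Set.Icc 0 1))
    (hρpos : ∀ x ∈ Set.Icc (0 : ℝ) 1, 0 < ρ x)
    (hρ1 : (∫ x in (0 : ℝ)..1, ρ x) = 1)
    (E : ℕ → ℝ) (hE0 : ∀ H, 0 ≤ E H)
    (hE : ∀ H : ℕ, 1 ≤ H → ∀ I : Set ℝ, I ⊆ Set.Icc 0 1 → I.OrdConnected →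
      |muH X H I - ∫ x in I, ρ x| ≤ E H)
    (H : ℕ) (hH : 1 ≤ H) (δ : ℝ) (hδ : δ ∈ Set.Ioo (0 : ℝ) 1)
    (I : Set ℝ) (hI : I ⊆ Set.Icc 0 1) (hIoc : I.OrdConnected)
    (hIpos : 0 < (volume I).toReal) (hIlt : (volume I).toReal < nuMod ρ δ) :
    |(1 / (volume I).toReal) * intInvRho X H I ρ - 1| ≤
      2 * δ / (1 - δ) + E H / ((volume I).toReal * sInf (ρ '' Set.Icc 0 1)) := by
  obtain ⟨hδ0, hδ1⟩ := hδ
  simp only [nuMod] at hIlt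
  set m := sInf (ρ '' Set.Icc 0 1) with hm_def
  set L := (volume I).toReal with hL_def
  set P := intInvRho X H I ρ with hP_def
  set Q := muH X H I with hQ_def
  -- basic facts about m
  have hK : IsCompact (ρ '' Set.Icc 0 1) := isCompact_Icc.image_of_continuousOn hρc
  have hKne : (ρ '' Set.Icc 0 1).Nonempty :=
    ⟨ρ 0, Set.mem_image_of_mem _ (by norm_num : (0:ℝ) ∈ Set.Icc (0:ℝ) 1)⟩
  have hm_mem : m ∈ ρ '' Set.Icc 0 1 := hK.sInf_mem hKne
  have hm0 : 0 < m := by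
    obtain ⟨x, hx, hxe⟩ := hm_mem
    rw [← hxe]; exact hρpos x hx
  have hm_le : ∀ x ∈ Set.Icc (0:ℝ) 1, m ≤ ρ x := fun x hx =>
    csInf_le hK.bddBelow (Set.mem_image_of_mem _ hx)
  -- I is nonempty, measurable, of finite measure
  have hImeas : MeasurableSet I := hIoc.measurableSet
  have hIfin : volume I < ⊤ := by
    refine lt_of_le_of_lt (measure_mono hI) ?_
    rw [Real.volume_Icc]; exact ENNReal.ofReal_lt_top
  have hIne : I.Nonempty := by
    rcases I.eq_empty_or_nonempty with h | h
    · exfalso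
      have h0 : (volume I).toReal = 0 := by rw [h]; simp
      rw [hL_def, h0] at hIpos
      exact lt_irrefl 0 hIpos
    · exact h
  -- distances within I are at most L
  have hdiam : ∀ x ∈ I, ∀ y ∈ I, |x - y| ≤ L := by
    have key : ∀ x ∈ I, ∀ y ∈ I, x ≤ y → y - x ≤ L := by
      intro x hx y hy hxy
      have hsub : Set.Icc x y ⊆ I := hIoc.out hx hy
      have h1 : volume (Set.Icc x y) ≤ volume I := measure_mono hsub
      rw [Real.volume_Icc] at h1
      have h2 := ENNReal.toReal_mono (ne_of_lt hIfin) h1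
      rwa [ENNReal.toReal_ofReal (by linarith)] at h2
    intro x hx y hy
    rcases le_total x y with h | h
    · rw [abs_sub_comm, abs_of_nonneg (sub_nonneg.2 h)]; exact key x hx y hy h
    · rw [abs_of_nonneg (sub_nonneg.2 h)]; exact key y hy x hx h
  -- extract ε with L < ε and etaMod ρ ε ≤ δ * m
  have hset : {ε : ℝ | 0 < ε ∧ etaMod ρ ε ≤ δ * m}.Nonempty := by
    by_contra h
    rw [Set.not_nonempty_iff_eq_empty] at h
    rw [h, Real.sSup_empty] at hIlt
    linarith
  obtain ⟨ε, hεmem, hLε⟩ := exists_lt_of_lt_csSup hset hIlt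
  obtain ⟨hε0, hεeta⟩ := hεmem
  -- modulus of continuity bound
  have hTne : {η : ℝ | 0 < η ∧ ∀ x ∈ Set.Icc (0:ℝ) 1, ∀ y ∈ Set.Icc (0:ℝ) 1,
      |x - y| ≤ ε → |ρ x - ρ y| ≤ η}.Nonempty := by
    set M := sSup (ρ '' Set.Icc 0 1) with hM_def
    have hM_le : ∀ x ∈ Set.Icc (0:ℝ) 1, ρ x ≤ M := fun x hx =>
      le_csSup hK.bddAbove (Set.mem_image_of_mem _ hx)
    have hmM : m ≤ M := by
      have h0 : (0:ℝ) ∈ Set.Icc (0:ℝ) 1 := by norm_num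
      exact (hm_le 0 h0).trans (hM_le 0 h0)
    refine ⟨M - m + 1, by linarith, fun x hx y hy _ => ?_⟩
    rw [abs_sub_le_iff]
    constructor <;> nlinarith [hm_le x hx, hm_le y hy, hM_le x hx, hM_le y hy]
  have hmod : ∀ x ∈ Set.Icc (0:ℝ) 1, ∀ y ∈ Set.Icc (0:ℝ) 1,
      |x - y| ≤ ε → |ρ x - ρ y| ≤ δ * m := by
    intro x hx y hy hxy
    have h1 : |ρ x - ρ y| ≤ etaMod ρ ε :=
      le_csInf hTne (fun η hη => hη.2 x hx y hy hxy)
    exact h1.trans hεeta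
  -- the local infimum r of ρ on I
  have hIimne : (ρ '' I).Nonempty := hIne.image ρ
  have hIimbdd : BddBelow (ρ '' I) := hK.bddBelow.mono (Set.image_mono hI)
  set r := sInf (ρ '' I) with hr_def
  have hr_le : ∀ x ∈ I, r ≤ ρ x := fun x hx => csInf_le hIimbdd (Set.mem_image_of_mem _ hx)
  have hmr : m ≤ r := le_csInf hIimne (by
    rintro b ⟨x, hx, rfl⟩
    exact hm_le x (hI hx))
  have hr0 : 0 < r := lt_of_lt_of_le hm0 hmr
  have hr_ub : ∀ x ∈ I, ρ x ≤ r + δ * m := by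
    intro x hx
    by_contra h
    push_neg at h
    have h1 : r < ρ x - δ * m := by linarith
    obtain ⟨b, hb, hbx⟩ := exists_lt_of_csInf_lt hIimne h1
    obtain ⟨y, hy, rfl⟩ := hb
    have h2 := hmod x (hI hx) y (hI hy) ((hdiam x hx y hy).trans hLε.le)
    have h3 := le_abs_self (ρ x - ρ y)
    linarith
  -- cardinality positivity
  have hN : 0 < ((X H).card : ℝ) := by
    exact_mod_cast Finset.card_pos.2 (hX H hH)
  -- sum comparisons
  have hSum1 : (∑ α ∈ X H, Set.indicator I (fun x => 1 / ρ x) (Int.fract α)) * r ≤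
      ∑ α ∈ X H, Set.indicator I (fun _ => (1:ℝ)) (Int.fract α) := by
    rw [Finset.sum_mul]
    refine Finset.sum_le_sum fun α _ => ?_
    by_cases hz : Int.fract α ∈ I
    · simp only [Set.indicator_of_mem hz]
      rw [div_mul_eq_mul_div, one_mul, div_le_one (hρpos _ (hI hz))]
      exact hr_le _ hz
    · simp [Set.indicator_of_notMem hz]
  have hSum2 : (∑ α ∈ X H, Set.indicator I (fun _ => (1:ℝ)) (Int.fract α)) ≤
      (∑ α ∈ X H, Set.indicator I (fun x => 1 / ρ x) (Int.fract α)) * (r + δ * m) := by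
    rw [Finset.sum_mul]
    refine Finset.sum_le_sum fun α _ => ?_
    by_cases hz : Int.fract α ∈ I
    · simp only [Set.indicator_of_mem hz]
      rw [div_mul_eq_mul_div, one_mul, le_div_iff₀ (hρpos _ (hI hz)), one_mul]
      exact hr_ub _ hz
    · simp [Set.indicator_of_notMem hz]
  have hPQ1 : P * r ≤ Q := by
    rw [hP_def, hQ_def]
    unfold intInvRho muH
    rw [div_mul_eq_mul_div]
    exact (div_le_div_iff_of_pos_right hN).mpr hSum1
  have hPQ2 : Q ≤ P * (r + δ * m) := by
    rw [hP_def, hQ_def]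
    unfold intInvRho muH
    rw [div_mul_eq_mul_div]
    exact (div_le_div_iff_of_pos_right hN).mpr hSum2
  have hP0 : 0 ≤ P := by
    rw [hP_def]; unfold intInvRho
    refine div_nonneg (Finset.sum_nonneg fun α _ => ?_) hN.le
    refine Set.indicator_nonneg (fun z hz => ?_) _
    exact (one_div_nonneg).2 (hρpos z (hI hz)).le
  -- integral bounds
  have hρint : IntegrableOn ρ I volume :=
    (hρc.integrableOn_Icc).mono_set hI
  have hconst : ∀ c : ℝ, IntegrableOn (fun _ => c) I volume := fun c =>
    integrableOn_const hIfin.ne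
  have hA1 : r * L ≤ ∫ x in I, ρ x := by
    have h1 := setIntegral_mono_on (hconst r) hρint hImeas (fun x hx => hr_le x hx)
    rwa [setIntegral_const, smul_eq_mul, mul_comm] at h1
  have hA2 : (∫ x in I, ρ x) ≤ (r + δ * m) * L := by
    have h1 := setIntegral_mono_on hρint (hconst (r + δ * m)) hImeas (fun x hx => hr_ub x hx)
    rwa [setIntegral_const, smul_eq_mul, mul_comm] at h1
  -- discrepancy bound
  have hQA : |Q - ∫ x in I, ρ x| ≤ E H := hE H hH I hI hIoc
  rw [abs_le] at hQA
  obtain ⟨hQA1, hQA2⟩ := hQA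
  set A := ∫ x in I, ρ x with hA_def
  -- abbreviate the error term
  set e := E H / (L * m) with he_def
  have hLm : 0 < L * m := mul_pos hIpos hm0
  have he : e * (L * m) = E H := div_mul_cancel₀ _ (ne_of_gt hLm)
  have he0 : 0 ≤ e := div_nonneg (hE0 H) hLm.le
  have hL : 0 < L := hIpos
  have hrδ : 0 < r + δ * m := by positivity
  clear_value m L P Q r A e
  clear hSum1 hSum2 hE hX hρc hρpos hρ1 hmod hdiam hr_le hr_ub hm_le hconst hρint
  clear hK hKne hm_mem hεeta hset hTne hIlt hIne hIimne hIimbdd hImeas hIfin hI hIoc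
  clear hε0 hLε hN hE0 hm_def hL_def hP_def hQ_def hr_def hA_def he_def
  -- key polynomial inequalities
  have h1 : P * r ≤ (r + δ * m) * L + e * (L * m) := by
    rw [he]; linarith
  have h2 : r * L - e * (L * m) ≤ P * (r + δ * m) := by
    rw [he]; linarith
  have key : |1 / L * P - 1| ≤ δ + e := by
    rw [abs_le]
    have hPL : 1 / L * P = P / L := by ring
    constructor
    · rw [hPL, neg_le, neg_sub, sub_le_iff_le_add]
      have h3 : (1 - δ - e) * L * (r + δ * m) ≤ P * (r + δ * m) := by
        nlinarith [mul_nonneg (mul_nonneg hL.le hδ0.le) (sub_nonneg.2 hmr),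
          mul_nonneg (mul_nonneg (mul_nonneg hL.le hδ0.le) hδ0.le) hm0.le,
          mul_nonneg (mul_nonneg hL.le he0) (sub_nonneg.2 hmr),
          mul_nonneg (mul_nonneg (mul_nonneg hL.le he0) hδ0.le) hm0.le]
      have h4 : (1 - δ - e) * L ≤ P := le_of_mul_le_mul_right h3 hrδ
      have h4' : 1 - δ - e ≤ P / L := (le_div_iff₀ hL).2 (by linarith)
      linarith
    · rw [hPL, sub_le_iff_le_add, div_le_iff₀ hL]
      have h5 : P * r ≤ (δ + e + 1) * L * r := by
        nlinarith [mul_nonneg (mul_nonneg hL.le hδ0.le) (sub_nonneg.2 hmr),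
          mul_nonneg (mul_nonneg hL.le he0) (sub_nonneg.2 hmr)]
      have h6 : P ≤ (δ + e + 1) * L := le_of_mul_le_mul_right h5 hr0
      linarith
  refine key.trans ?_
  have hδδ : δ ≤ 2 * δ / (1 - δ) := by
    rw [le_div_iff₀ (by linarith : (0:ℝ) < 1 - δ)]
    nlinarith
  linarith
end
end

section
/- Assume the general counting-measure setup. Let Ω ⊂ [0,1] be a finite union of closed intervals with len*(Ω) > 0, let H ≥ 1 be an integer and let δ ∈ (0,1) be such that len*(Ω) < ν_ρ(δ). Then μ_H(Ω) ≤ 4·∫_Ω ρ + (8δ/(1−δ) + E(H)/(len*(Ω)·min_{[0,1]} ρ))·(|Ω|·η_ρ(len*(Ω)) + ∫_Ω ρ) + 4·|Ω|·η_ρ(len*(Ω)), where len*(Ω) is the minimal length of the connected components of Ω and |·| denotes Lebesgue measure. -/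
open MeasureTheory Set

noncomputable section

theorem stmt14
    (X : ℕ → Finset ℝ) (hX : ∀ H : ℕ, 1 ≤ H → (X H).Nonempty)
    (ρ : ℝ → ℝ) (hρc : ContinuousOn ρ (Set.Icc 0 1))
    (hρpos : ∀ x ∈ Set.Icc (0 : ℝ) 1, 0 < ρ x)
    (hρ1 : (∫ x in (0 : ℝ)..1, ρ x) = 1)
    (E : ℕ → ℝ) (hE0 : ∀ H, 0 ≤ E H)
    (hE : ∀ H : ℕ, 1 ≤ H → ∀ I : Set ℝ, I ⊆ Set.Icc 0 1 → I.OrdConnected →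
      |muH X H I - ∫ x in I, ρ x| ≤ E H)
    (Ω : Set ℝ)
    (hΩ : ∃ (m : ℕ) (a b : Fin m → ℝ), (∀ i, a i ≤ b i) ∧ Ω = ⋃ i, Set.Icc (a i) (b i))
    (hΩs : Ω ⊆ Set.Icc 0 1) (hlen : 0 < lenStar Ω)
    (H : ℕ) (hH : 1 ≤ H) (δ : ℝ) (hδ : δ ∈ Set.Ioo (0 : ℝ) 1)
    (hlt : lenStar Ω < nuMod ρ δ) :
    muH X H Ω ≤
      4 * (∫ x in Ω, ρ x) +
      (8 * δ / (1 - δ) + E H / (lenStar Ω * sInf (ρ '' Set.Icc 0 1))) *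
        ((volume Ω).toReal * etaMod ρ (lenStar Ω) + ∫ x in Ω, ρ x) +
      4 * (volume Ω).toReal * etaMod ρ (lenStar Ω) := by
  classical
  obtain ⟨m, a, b, hab, hΩeq⟩ := hΩ
  -- components
  set C : Fin m → Set ℝ := fun i => connectedComponentIn Ω (a i) with hC
  have haΩ : ∀ i, a i ∈ Ω := by
    intro i
    rw [hΩeq]
    exact mem_iUnion.2 ⟨i, left_mem_Icc.2 (hab i)⟩
  have hCsub : ∀ i, C i ⊆ Ω := fun i => connectedComponentIn_subset Ω (a i)
  have hCmem : ∀ i, a i ∈ C i := fun i => mem_connectedComponentIn (haΩ i)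
  have hΩu : Ω = ⋃ i, C i := by
    apply Subset.antisymm
    · intro x hx
      rw [hΩeq] at hx
      obtain ⟨i, hi⟩ := mem_iUnion.1 hx
      refine mem_iUnion.2 ⟨i, ?_⟩
      have : Icc (a i) (b i) ⊆ C i := by
        apply isPreconnected_Icc.subset_connectedComponentIn (left_mem_Icc.2 (hab i))
        rw [hΩeq]; exact subset_iUnion (fun i => Icc (a i) (b i)) i
      exact this hi
    · exact iUnion_subset hCsub
  set T : Finset (Set ℝ) := Finset.image C Finset.univ with hT
  have hTmem : ∀ s ∈ T, ∃ i, C i = s := by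
    intro s hs
    obtain ⟨i, _, hi⟩ := Finset.mem_image.1 hs
    exact ⟨i, hi⟩
  -- pairwise disjoint
  have hdisj : (↑T : Set (Set ℝ)).Pairwise (Function.onFun Disjoint (id : Set ℝ → Set ℝ)) := by
    intro s hs t ht hst
    obtain ⟨i, hi⟩ := hTmem s hs
    obtain ⟨j, hj⟩ := hTmem t ht
    simp only [Function.onFun, id_eq]
    rw [Set.disjoint_left]
    intro z hzs hzt
    apply hst
    rw [← hi, ← hj] at *
    have h1 : connectedComponentIn Ω (a i) = connectedComponentIn Ω z :=
      connectedComponentIn_eq hzs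
    have h2 : connectedComponentIn Ω (a j) = connectedComponentIn Ω z :=
      connectedComponentIn_eq hzt
    simp only [hC] at *
    rw [h1, h2]
  have hCord : ∀ i, (C i).OrdConnected :=
    fun i => isPreconnected_connectedComponentIn.ordConnected
  have hCmeas : ∀ i, MeasurableSet (C i) := fun i => (hCord i).measurableSet
  have hTmeas : ∀ s ∈ T, MeasurableSet s := by
    intro s hs; obtain ⟨i, hi⟩ := hTmem s hs; exact hi ▸ hCmeas i
  have hΩmeas : MeasurableSet Ω := by
    rw [hΩeq]; exact MeasurableSet.iUnion fun i => measurableSet_Icc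
  have hΩbu : Ω = ⋃ s ∈ T, (id s : Set ℝ) := by
    rw [hΩu]
    ext x
    simp only [mem_iUnion, id, hT, Finset.mem_image, Finset.mem_univ, true_and,
      exists_prop]
    constructor
    · rintro ⟨i, hi⟩; exact ⟨C i, ⟨i, rfl⟩, hi⟩
    · rintro ⟨s, ⟨i, rfl⟩, hx⟩; exact ⟨i, hx⟩
  -- integrability
  have hint : IntegrableOn ρ (Icc (0:ℝ) 1) := hρc.integrableOn_Icc
  have hintΩ : IntegrableOn ρ Ω := hint.mono_set hΩs
  have hTint : ∀ s ∈ T, IntegrableOn ρ s := by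
    intro s hs
    obtain ⟨i, hi⟩ := hTmem s hs
    exact hint.mono_set (hi ▸ (hCsub i).trans hΩs)
  -- integral decomposition
  have hIsum : ∫ x in Ω, ρ x = ∑ s ∈ T, ∫ x in s, ρ x := by
    rw [hΩbu]
    exact integral_biUnion_finset T hTmeas hdisj hTint
  -- indicator decomposition
  have hind : ∀ x : ℝ, Set.indicator Ω (fun _ => (1:ℝ)) x
      = ∑ s ∈ T, Set.indicator s (fun _ => (1:ℝ)) x := by
    intro x
    by_cases hx : x ∈ Ω
    · have hx' := hx
      rw [hΩu] at hx'
      obtain ⟨i, hi⟩ := mem_iUnion.1 hx'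
      have hCiT : C i ∈ T := Finset.mem_image.2 ⟨i, Finset.mem_univ i, rfl⟩
      rw [Set.indicator_of_mem hx, Finset.sum_eq_single_of_mem (C i) hCiT]
      · exact (Set.indicator_of_mem hi (fun _ => (1:ℝ))).symm
      · intro s hs hne
        apply Set.indicator_of_notMem
        intro hxs
        exact (Set.disjoint_left.1 (hdisj hs hCiT hne) hxs) hi
    · rw [Set.indicator_of_notMem hx]
      refine (Finset.sum_eq_zero fun s hs => ?_).symm
      obtain ⟨i, hi⟩ := hTmem s hs
      exact Set.indicator_of_notMem (fun hxs => hx ((hi ▸ (hCsub i).trans subset_rfl) hxs)) _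
  -- muH decomposition
  have hmu : muH X H Ω = ∑ s ∈ T, muH X H s := by
    unfold muH
    rw [← Finset.sum_div]
    congr 1
    calc (∑ α ∈ X H, Set.indicator Ω (fun _ => (1:ℝ)) (Int.fract α))
        = ∑ α ∈ X H, ∑ s ∈ T, Set.indicator s (fun _ => (1:ℝ)) (Int.fract α) :=
          Finset.sum_congr rfl fun α _ => hind _
      _ = ∑ s ∈ T, ∑ α ∈ X H, Set.indicator s (fun _ => (1:ℝ)) (Int.fract α) :=
          Finset.sum_comm
  -- per-component bound
  have hcomp : ∀ s ∈ T, muH X H s ≤ (∫ x in s, ρ x) + E H := by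
    intro s hs
    obtain ⟨i, hi⟩ := hTmem s hs
    have := hE H hH s (hi ▸ (hCsub i).trans hΩs) (hi ▸ hCord i)
    linarith [(abs_le.1 this).2]
  -- volume facts
  have hΩvol : volume Ω ≠ ⊤ := by
    intro h
    have : volume Ω ≤ volume (Icc (0:ℝ) 1) := measure_mono hΩs
    simp [Real.volume_Icc] at this
    rw [h] at this
    exact (by norm_num : ¬ ((⊤ : ENNReal) ≤ 1)) this
  have hsvol : ∀ s ∈ T, volume s ≠ ⊤ := by
    intro s hs
    obtain ⟨i, hi⟩ := hTmem s hs
    intro h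
    have : volume s ≤ volume Ω := measure_mono (hi ▸ hCsub i)
    rw [h, top_le_iff] at this
    exact hΩvol this
  have hVsum : (volume Ω).toReal = ∑ s ∈ T, (volume s).toReal := by
    rw [hΩbu, measure_biUnion_finset hdisj hTmeas]
    simp only [id_eq]
    exact ENNReal.toReal_sum fun s hs => hsvol s hs
  -- each component has volume ≥ lenStar
  have hlenle : ∀ s ∈ T, lenStar Ω ≤ (volume s).toReal := by
    intro s hs
    obtain ⟨i, hi⟩ := hTmem s hs
    have hmem : (volume s).toReal
        ∈ (fun x => (volume (connectedComponentIn Ω x)).toReal) '' Ω := by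
      exact ⟨a i, haΩ i, by rw [← hi]⟩
    exact csInf_le ⟨0, by rintro _ ⟨x, hx, rfl⟩; exact ENNReal.toReal_nonneg⟩ hmem
  have hcard : (T.card : ℝ) * lenStar Ω ≤ (volume Ω).toReal := by
    rw [hVsum]
    calc (T.card : ℝ) * lenStar Ω = ∑ _s ∈ T, lenStar Ω := by
          rw [Finset.sum_const, nsmul_eq_mul]
      _ ≤ ∑ s ∈ T, (volume s).toReal := Finset.sum_le_sum hlenle
  -- minimum of ρ
  set r := sInf (ρ '' Set.Icc (0:ℝ) 1) with hr
  have hIccC : IsCompact (Icc (0:ℝ) 1) := isCompact_Icc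
  obtain ⟨x0, hx0, hx0min⟩ := hIccC.exists_isMinOn (by norm_num : (Icc (0:ℝ) 1).Nonempty)
    hρc
  have hbdd : BddBelow (ρ '' Icc (0:ℝ) 1) :=
    ⟨0, by rintro _ ⟨x, hx, rfl⟩; exact (hρpos x hx).le⟩
  have hrx0 : r = ρ x0 := by
    refine le_antisymm (csInf_le hbdd ⟨x0, hx0, rfl⟩)
      (le_csInf ⟨ρ x0, ⟨x0, hx0, rfl⟩⟩ ?_)
    rintro _ ⟨x, hx, rfl⟩
    exact hx0min hx
  have hrpos : 0 < r := hrx0 ▸ hρpos x0 hx0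
  have hrle : ∀ x ∈ Ω, r ≤ ρ x := by
    intro x hx
    exact csInf_le hbdd ⟨x, hΩs hx, rfl⟩
  have hrV : r * (volume Ω).toReal ≤ ∫ x in Ω, ρ x :=
    setIntegral_ge_of_const_le_real hΩmeas hΩvol hrle hintΩ
  -- collect nonnegativity
  have hA : (0:ℝ) ≤ ∫ x in Ω, ρ x := by
    have := mul_nonneg hrpos.le (ENNReal.toReal_nonneg : (0:ℝ) ≤ (volume Ω).toReal)
    linarith
  have hη : 0 ≤ etaMod ρ (lenStar Ω) := by
    apply Real.sInf_nonneg
    rintro η ⟨hη, -⟩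
    exact hη.le
  have hV0 : (0:ℝ) ≤ (volume Ω).toReal := ENNReal.toReal_nonneg
  have hq : (0:ℝ) ≤ 8 * δ / (1 - δ) := by
    apply div_nonneg (by linarith [hδ.1]) (by linarith [hδ.2])
  -- main chain
  have hmain : muH X H Ω ≤ (∫ x in Ω, ρ x) + (T.card : ℝ) * E H := by
    rw [hmu, hIsum]
    calc ∑ s ∈ T, muH X H s ≤ ∑ s ∈ T, ((∫ x in s, ρ x) + E H) :=
          Finset.sum_le_sum hcomp
      _ = (∑ s ∈ T, ∫ x in s, ρ x) + (T.card : ℝ) * E H := by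
          rw [Finset.sum_add_distrib, Finset.sum_const, nsmul_eq_mul]
  have hkE : (T.card : ℝ) * E H ≤ E H / (lenStar Ω * r) * (∫ x in Ω, ρ x) := by
    rw [div_mul_eq_mul_div, le_div_iff₀ (mul_pos hlen hrpos)]
    have h1 : (T.card : ℝ) * E H * (lenStar Ω * r)
        = ((T.card : ℝ) * lenStar Ω) * r * E H := by ring
    rw [h1]
    have h2 : ((T.card : ℝ) * lenStar Ω) * r ≤ (volume Ω).toReal * r :=
      mul_le_mul_of_nonneg_right hcard hrpos.le
    have h3 : (volume Ω).toReal * r ≤ ∫ x in Ω, ρ x := by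
      rw [mul_comm]; exact hrV
    calc ((T.card : ℝ) * lenStar Ω) * r * E H
        ≤ (∫ x in Ω, ρ x) * E H :=
          mul_le_mul_of_nonneg_right (h2.trans h3) (hE0 H)
      _ = E H * (∫ x in Ω, ρ x) := mul_comm _ _
  have hEnn : 0 ≤ E H / (lenStar Ω * r) := div_nonneg (hE0 H) (mul_pos hlen hrpos).le
  nlinarith [mul_nonneg hq (add_nonneg (mul_nonneg hV0 hη) hA),
    mul_nonneg hEnn (mul_nonneg hV0 hη), mul_nonneg hV0 hη,
    mul_le_mul_of_nonneg_left (le_refl (∫ x in Ω, ρ x)) hEnn]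
end
end
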